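/- arXiv:math/9704220 — 5 statements merged into one kernel-verified Lean document; each statement's English description precedes it below -/
import Mathlib

section
/- Let 1 < α < 2 be irrational and set α' = α/(α-1). Then 1/α + 1/α' = 1, and for every positive integer n, the nearest integer multiple of α to n is greater than n if and only if the nearest integer multiple of α' to n is less than n (i.e., A_α = B_{α'}). -/
/-- `E α n` is the error `n - qα` where `qα` is the integer multiple of `α`
nearest to `n` (for `α > 1`, this multiple is `round (n/α) * α`). -/
noncomputable def E (α : ℝ) (n : ℕ) : ℝ := (n : ℝ) - round ((n : ℝ) / α) * α

/-- `A_α`: positive integers whose nearest multiple of `α` exceeds them. -/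
def Aset (α : ℝ) : Set ℕ := {n | 0 < n ∧ E α n < 0}

/-- `B_α`: positive integers whose nearest multiple of `α` is below them. -/
def Bset (α : ℝ) : Set ℕ := {n | 0 < n ∧ 0 < E α n}

/-- `S_α`: positive integers not expressible as a sum of two distinct elements
of `A_α` nor of two distinct elements of `B_α`. -/
def Sset (α : ℝ) : Set ℕ :=
  {s | 0 < s ∧ (∀ x ∈ Aset α, ∀ y ∈ Aset α, x ≠ y → x + y ≠ s) ∧
       (∀ x ∈ Bset α, ∀ y ∈ Bset α, x ≠ y → x + y ≠ s)}

lemma round_neg_irrational (x : ℝ) (hx : Irrational x) : round (-x) = -round x := by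
  have hy : Irrational (x - 1/2) := by
    simpa [sub_eq_add_neg] using hx.add_ratCast (q := -(1/2))
  have hceil : ⌈x - 1/2⌉ = ⌊x - 1/2⌋ + 1 := by
    have h1 : (⌊x - 1/2⌋ : ℝ) < x - 1/2 :=
      lt_of_le_of_ne (Int.floor_le _) (fun h => hy ⟨⌊x - 1/2⌋, by exact_mod_cast h⟩)
    have h2 : ⌊x - 1/2⌋ < ⌈x - 1/2⌉ := Int.lt_ceil.2 h1
    have h3 : ⌈x - 1/2⌉ ≤ ⌊x - 1/2⌋ + 1 := Int.ceil_le.2 (by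
      push_cast
      linarith [Int.lt_floor_add_one (x - 1/2)])
    omega
  have h1 : round (-x) = ⌊-x + 1/2⌋ := round_eq _
  have h2 : round x = ⌊x + 1/2⌋ := round_eq _
  have h3 : (-x + 1/2 : ℝ) = -(x - 1/2) := by ring
  have h4 : (x + 1/2 : ℝ) = (x - 1/2) + 1 := by ring
  rw [h1, h2, h3, h4, Int.floor_neg, Int.floor_add_one, hceil]

/-- For irrational `1 < α < 2` and `α' = α/(α-1)`, we have `1/α + 1/α' = 1`
and `A_α = B_{α'}`. -/
theorem stmt1 (α : ℝ) (h1 : 1 < α) (h2 : α < 2) (hirr : Irrational α) :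
    1 / α + 1 / (α / (α - 1)) = 1 ∧ Aset α = Bset (α / (α - 1)) := by
  have hα0 : α ≠ 0 := by linarith
  have hα1 : α - 1 ≠ 0 := by intro h; apply hα0; linarith
  constructor
  · field_simp
    ring
  · ext n
    simp only [Aset, Bset, Set.mem_setOf_eq]
    refine and_congr_right fun hn => ?_
    -- key computation
    have hirr' : Irrational ((n : ℝ) / α) := by
      have := (hirr.inv).natCast_mul hn.ne'
      simpa [div_eq_mul_inv, mul_comm] using this
    have hdiv : (n : ℝ) / (α / (α - 1)) = (n : ℝ) + (-(↑n / α)) := by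
      field_simp
      ring
    have hround : round ((n : ℝ) / (α / (α - 1))) = (n : ℤ) - round ((n : ℝ) / α) := by
      rw [hdiv]
      rw [show ((n : ℝ) + (-(↑n / α))) = ((n : ℤ) : ℝ) + (-(↑n / α)) by push_cast; ring]
      rw [round_intCast_add, round_neg_irrational _ hirr']
      ring
    have hE : E (α / (α - 1)) n = -(E α n) / (α - 1) := by
      unfold E
      rw [hround]
      push_cast
      field_simp
      ring
    rw [hE]
    constructor
    · intro h
      have h' : 0 < -(E α n) := by linarith
      exact div_pos h' (by linarith)
    · intro h
      by_contra hle
      push_neg at hle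
      have : -(E α n) / (α - 1) ≤ 0 := by
        apply div_nonpos_of_nonpos_of_nonneg <;> linarith
      linarith
end

section
/- Let α > 1 be irrational with convergents p_n/q_n, and E(p) = p − qα the error to the nearest multiple of α. If p is a positive integer with p < p_{n+1} and |E(p)| < |E(p_{n-1})|, then p = k·p_n or p = k·p_n + p_{n-1} for some positive integer k. -/
/-- Data of the continued fraction expansion `α = [a 0; a 1, a 2, ...]` of an
irrational `α > 1`, with `t n` the successive complete quotients, and
`p n / q n` the convergents. -/
structure CF (α : ℝ) where
  a : ℕ → ℕ
  t : ℕ → ℝ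
  p : ℕ → ℕ
  q : ℕ → ℕ
  t0 : t 0 = α
  ha : ∀ n, 1 ≤ a n
  floor_t : ∀ n, (a n : ℝ) = ⌊t n⌋
  t_rec : ∀ n, t n = a n + 1 / t (n + 1)
  p0 : p 0 = a 0
  p1 : p 1 = a 1 * a 0 + 1
  p_rec : ∀ n, p (n + 2) = a (n + 2) * p (n + 1) + p n
  q0 : q 0 = 1
  q1 : q 1 = a 1
  q_rec : ∀ n, q (n + 2) = a (n + 2) * q (n + 1) + q n

/-- The numerators extended by two initial terms: `P 0 = p_{-2} = 0`,
`P 1 = p_{-1} = 1`, and `P (n+2) = p n`. -/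
def CF.P {α : ℝ} (c : CF α) : ℕ → ℕ
  | 0 => 0
  | 1 => 1
  | n + 2 => c.p n


/-- The denominators extended analogously: `Q 0 = q_{-2} = 1`, `Q 1 = q_{-1} = 0`. -/
def CF.Q {α : ℝ} (c : CF α) : ℕ → ℕ
  | 0 => 1
  | 1 => 0
  | n + 2 => c.q n

variable {α : ℝ}

lemma P_rec (c : CF α) : ∀ m, c.P (m + 2) = c.a m * c.P (m + 1) + c.P m
  | 0 => by simp [CF.P, c.p0]
  | 1 => by simp [CF.P, c.p1, c.p0]
  | m + 2 => by simp [CF.P, c.p_rec m]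

lemma Q_rec (c : CF α) : ∀ m, c.Q (m + 2) = c.a m * c.Q (m + 1) + c.Q m
  | 0 => by simp [CF.Q, c.q0]
  | 1 => by simp [CF.Q, c.q1, c.q0]
  | m + 2 => by simp [CF.Q, c.q_rec m]

lemma P_pos (c : CF α) : ∀ m, 1 ≤ c.P (m + 1)
  | 0 => by simp [CF.P]
  | m + 1 => by
    rw [P_rec]
    have h1 := P_pos c m
    have h2 := c.ha m
    nlinarith

lemma Q_pos (c : CF α) : ∀ m, 1 ≤ c.Q (m + 2)
  | 0 => by simp [CF.Q, c.q0]
  | m + 1 => by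
    rw [Q_rec]
    have h1 := Q_pos c m
    have h2 := c.ha (m + 1)
    nlinarith

lemma t_ge_one (c : CF α) (m : ℕ) : 1 ≤ c.t m := by
  have h1 := c.floor_t m
  have h2 := c.ha m
  have h3 : (⌊c.t m⌋ : ℝ) ≤ c.t m := Int.floor_le _
  have : (1 : ℝ) ≤ (c.a m : ℝ) := by exact_mod_cast h2
  linarith

lemma det (c : CF α) : ∀ m, (c.P (m + 1) : ℤ) * c.Q m - c.P m * c.Q (m + 1) = (-1) ^ m
  | 0 => by simp [CF.P, CF.Q]
  | m + 1 => by
    have ih := det c m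
    have hp := P_rec c m
    have hq := Q_rec c m
    have hp' : (c.P (m + 2) : ℤ) = c.a m * c.P (m + 1) + c.P m := by exact_mod_cast hp
    have hq' : (c.Q (m + 2) : ℤ) = c.a m * c.Q (m + 1) + c.Q m := by exact_mod_cast hq
    rw [pow_succ]
    rw [hp', hq']
    linear_combination (-1 : ℤ) * ih

lemma alpha_eq (c : CF α) : ∀ m, α * (c.Q (m + 1) * c.t m + c.Q m) = c.P (m + 1) * c.t m + c.P m
  | 0 => by simp [CF.P, CF.Q, c.t0]
  | m + 1 => by
    have ih := alpha_eq c m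
    have ht : c.t (m + 1) ≠ 0 := by have := t_ge_one c (m + 1); linarith
    rw [c.t_rec m] at ih
    have hp : (c.P (m + 2) : ℝ) = c.a m * c.P (m + 1) + c.P m := by
      exact_mod_cast congrArg (Nat.cast : ℕ → ℝ) (P_rec c m)
    have hq : (c.Q (m + 2) : ℝ) = c.a m * c.Q (m + 1) + c.Q m := by
      exact_mod_cast congrArg (Nat.cast : ℕ → ℝ) (Q_rec c m)
    rw [hp, hq]
    field_simp at ih ⊢
    linear_combination ih

noncomputable def eps (c : CF α) (m : ℕ) : ℝ := c.P m - c.Q m * α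

noncomputable def del (c : CF α) (m : ℕ) : ℝ := c.t m / (c.Q (m + 1) * c.t m + c.Q m)

lemma den_pos (c : CF α) (m : ℕ) : 0 < (c.Q (m + 1) : ℝ) * c.t m + c.Q m := by
  have ht := t_ge_one c m
  match m with
  | 0 => simp [CF.Q]
  | m + 1 =>
    have h1 : (1 : ℝ) ≤ c.Q (m + 1 + 1) := by exact_mod_cast Q_pos c m
    have h2 : (0 : ℝ) ≤ c.Q (m + 1) := by positivity
    nlinarith

lemma del_pos (c : CF α) (m : ℕ) : 0 < del c m := by
  have := den_pos c m
  have := t_ge_one c m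
  unfold del
  positivity

lemma eps_eq (c : CF α) (m : ℕ) : eps c m = (-1) ^ (m + 1) * del c m := by
  have hden := den_pos c m
  have hae := alpha_eq c m
  have hdet : ((c.P (m + 1) : ℝ)) * c.Q m - c.P m * c.Q (m + 1) = (-1) ^ m := by
    exact_mod_cast congrArg (Int.cast : ℤ → ℝ) (det c m)
  have key : ((c.P m : ℝ) - c.Q m * α) * (c.Q (m + 1) * c.t m + c.Q m)
      = (-1) ^ (m + 1) * c.t m := by
    linear_combination (-(c.Q m : ℝ)) * hae - c.t m * hdet
  unfold eps del
  rw [mul_div_assoc', eq_div_iff hden.ne']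
  linear_combination key

lemma eps_rec (c : CF α) (m : ℕ) :
    eps c (m + 2) = c.a m * eps c (m + 1) + eps c m := by
  have hp : (c.P (m + 2) : ℝ) = c.a m * c.P (m + 1) + c.P m := by
    exact_mod_cast congrArg (Nat.cast : ℕ → ℝ) (P_rec c m)
  have hq : (c.Q (m + 2) : ℝ) = c.a m * c.Q (m + 1) + c.Q m := by
    exact_mod_cast congrArg (Nat.cast : ℕ → ℝ) (Q_rec c m)
  unfold eps
  rw [hp, hq]; ring

lemma del_rec (c : CF α) (m : ℕ) :
    del c m = c.a m * del c (m + 1) + del c (m + 2) := by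
  have h := eps_rec c m
  rw [eps_eq, eps_eq, eps_eq] at h
  have hm : ((-1 : ℝ)) ^ m ≠ 0 := pow_ne_zero _ (by norm_num)
  apply mul_left_cancel₀ hm
  simp only [pow_succ] at h
  linear_combination h

lemma del_lt (c : CF α) (m : ℕ) : del c (m + 1) < del c m := by
  have h := del_rec c m
  have h1 := del_pos c (m + 1)
  have h2 := del_pos c (m + 2)
  have h3 : (1 : ℝ) ≤ c.a m := by exact_mod_cast c.ha m
  nlinarith

lemma E_le (hα : 0 < α) (m : ℕ) (z : ℤ) : |E α m| ≤ |(m : ℝ) - z * α| := by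
  have h := round_le ((m : ℝ) / α) z
  have hne : α ≠ 0 := ne_of_gt hα
  have e1 : E α m = α * ((m : ℝ) / α - round ((m : ℝ) / α)) := by
    unfold E; field_simp
  have e2 : (m : ℝ) - z * α = α * ((m : ℝ) / α - z) := by field_simp
  rw [e1, e2, abs_mul, abs_mul, abs_of_pos hα]
  exact mul_le_mul_of_nonneg_left h (le_of_lt hα)



set_option maxHeartbeats 1000000 in
/-- Lemma 1: if `p < p_{n+1}` and `|E p| < |E p_{n-1}|` then `p = k * p_n`
or `p = k * p_n + p_{n-1}` for some positive `k`.  Indices are shifted by two: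
`c.P (n+1) = p_{n-1}`, `c.P (n+2) = p_n`, `c.P (n+3) = p_{n+1}`. -/
theorem stmt4 (α : ℝ) (hα : 1 < α) (hirr : Irrational α) (c : CF α) (n : ℕ)
    (p : ℕ) (hp : 0 < p) (hlt : p < c.P (n + 3))
    (hE : |E α p| < |E α (c.P (n + 1))|) :
    ∃ k : ℕ, 0 < k ∧
      (p = k * c.P (n + 2) ∨ p = k * c.P (n + 2) + c.P (n + 1)) := by
  have hα0 : (0 : ℝ) < α := by linarith
  set q : ℤ := round ((p : ℝ) / α) with hqdef
  have hdet := det c (n + 1)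
  have hsq : ((-1 : ℤ)) ^ (n + 1) * (-1) ^ (n + 1) = 1 := by
    rw [← pow_add]; exact Even.neg_one_pow ⟨n + 1, rfl⟩
  obtain ⟨x, y, hpxy, hqxy⟩ :
      ∃ x y : ℤ, (p : ℤ) = x * c.P (n + 2) + y * c.P (n + 1) ∧
        q = x * c.Q (n + 2) + y * c.Q (n + 1) := by
    refine ⟨(-1) ^ (n + 1) * ((p : ℤ) * c.Q (n + 1) - q * c.P (n + 1)),
      (-1) ^ (n + 1) * (q * c.P (n + 2) - (p : ℤ) * c.Q (n + 2)), ?_, ?_⟩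
    · linear_combination (-(-1 : ℤ) ^ (n + 1) * (p : ℤ)) * hdet - (p : ℤ) * hsq
    · linear_combination (-(-1 : ℤ) ^ (n + 1) * q) * hdet - q * hsq
  have hpR : (p : ℝ) = (x : ℝ) * c.P (n + 2) + (y : ℝ) * c.P (n + 1) := by
    exact_mod_cast congrArg (Int.cast : ℤ → ℝ) hpxy
  have hqR : (q : ℝ) = (x : ℝ) * c.Q (n + 2) + (y : ℝ) * c.Q (n + 1) := by
    exact_mod_cast congrArg (Int.cast : ℤ → ℝ) hqxy
  have hEp : E α p = (x : ℝ) * eps c (n + 2) + (y : ℝ) * eps c (n + 1) := by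
    have h0 : E α p = (p : ℝ) - (q : ℝ) * α := by rw [hqdef]; rfl
    rw [h0]
    unfold eps
    linear_combination hpR - α * hqR
  clear_value q
  have hsign : E α p = (-1 : ℝ) ^ (n + 1) *
      ((x : ℝ) * del c (n + 2) - (y : ℝ) * del c (n + 1)) := by
    rw [hEp, eps_eq c (n + 2), eps_eq c (n + 1)]
    simp only [pow_succ]; ring
  have habs : |E α p| = |(x : ℝ) * del c (n + 2) - (y : ℝ) * del c (n + 1)| := by
    rw [hsign, abs_mul, abs_pow, abs_neg, abs_one, one_pow, one_mul]
  have hEP1 : |E α (c.P (n + 1))| ≤ del c (n + 1) := by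
    have h1 := E_le hα0 (c.P (n + 1)) ((c.Q (n + 1) : ℤ))
    have h2 : |(c.P (n + 1) : ℝ) - ((c.Q (n + 1) : ℤ) : ℝ) * α| = del c (n + 1) := by
      have h3 : (c.P (n + 1) : ℝ) - ((c.Q (n + 1) : ℤ) : ℝ) * α = eps c (n + 1) := by
        unfold eps; push_cast; ring
      rw [h3, eps_eq c (n + 1), abs_mul, abs_pow, abs_neg, abs_one, one_pow, one_mul,
        abs_of_pos (del_pos c (n + 1))]
    rw [h2] at h1; exact h1
  have hcore : |(x : ℝ) * del c (n + 2) - (y : ℝ) * del c (n + 1)| < del c (n + 1) := by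
    rw [← habs]; exact lt_of_lt_of_le hE hEP1
  have hd1 := del_pos c (n + 1)
  have hd2 := del_pos c (n + 2)
  have hd3 := del_pos c (n + 3)
  have hrec := del_rec c (n + 1)
  have hcor1 : -(del c (n + 1)) < (x : ℝ) * del c (n + 2) - (y : ℝ) * del c (n + 1) :=
    neg_lt_of_abs_lt hcore
  have hcor2 : (x : ℝ) * del c (n + 2) - (y : ℝ) * del c (n + 1) < del c (n + 1) :=
    lt_of_abs_lt hcore
  have hP1 : (1 : ℤ) ≤ c.P (n + 1) := by exact_mod_cast P_pos c n
  have hP2 : (1 : ℤ) ≤ c.P (n + 2) := by exact_mod_cast P_pos c (n + 1)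
  have hP12 : (c.P (n + 1) : ℤ) ≤ c.P (n + 2) := by
    have h := P_rec c n
    have ha := c.ha n
    have h' : c.P (n + 1) ≤ c.P (n + 2) := by
      rw [h]
      calc c.P (n + 1) ≤ c.a n * c.P (n + 1) := Nat.le_mul_of_pos_left _ (c.ha n)
        _ ≤ c.a n * c.P (n + 1) + c.P n := Nat.le_add_right _ _
    exact_mod_cast h'
  have haN : (1 : ℤ) ≤ c.a (n + 1) := by exact_mod_cast c.ha (n + 1)
  have hltZ : (p : ℤ) < c.a (n + 1) * c.P (n + 2) + c.P (n + 1) := by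
    have h := P_rec c (n + 1)
    have h' : p < c.a (n + 1) * c.P (n + 2) + c.P (n + 1) := by rw [← h]; exact hlt
    exact_mod_cast h'
  have hpZ : (0 : ℤ) < (p : ℤ) := by exact_mod_cast hp
  -- 0 ≤ y
  have hy0 : 0 ≤ y := by
    by_contra h
    push_neg at h
    have hym : y ≤ -1 := by omega
    have hyR : (y : ℝ) ≤ -1 := by exact_mod_cast hym
    rcases le_or_gt 0 x with hx | hx
    · have hxR : (0 : ℝ) ≤ (x : ℝ) := by exact_mod_cast hx
      have t1 : (0 : ℝ) ≤ (x : ℝ) * del c (n + 2) := mul_nonneg hxR hd2.le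
      have t2 : (y : ℝ) * del c (n + 1) ≤ -1 * del c (n + 1) :=
        mul_le_mul_of_nonneg_right hyR hd1.le
      linarith
    · have hx1 : x ≤ -1 := by omega
      have t1 : x * (c.P (n + 2) : ℤ) ≤ -1 * c.P (n + 2) :=
        mul_le_mul_of_nonneg_right hx1 (by linarith)
      have t2 : y * (c.P (n + 1) : ℤ) ≤ -1 * c.P (n + 1) :=
        mul_le_mul_of_nonneg_right hym (by linarith)
      linarith [hpxy]
  -- y ≤ 1
  have hy1 : y ≤ 1 := by
    by_contra h
    push_neg at h
    have hy2 : 2 ≤ y := by omega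
    have hyR : (2 : ℝ) ≤ (y : ℝ) := by exact_mod_cast hy2
    have t2 : 2 * del c (n + 1) ≤ (y : ℝ) * del c (n + 1) :=
      mul_le_mul_of_nonneg_right hyR hd1.le
    rcases le_or_gt x 0 with hx | hx
    · have hxR : (x : ℝ) ≤ 0 := by exact_mod_cast hx
      have t1 : (x : ℝ) * del c (n + 2) ≤ 0 := mul_nonpos_of_nonpos_of_nonneg hxR hd2.le
      linarith
    · have hxZ : 1 ≤ x := hx
      have t3 : 1 * (c.P (n + 1) : ℤ) ≤ (y - 1) * c.P (n + 1) :=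
        mul_le_mul_of_nonneg_right (by omega) (by linarith)
      have t4 : x * (c.P (n + 2) : ℤ) < c.a (n + 1) * c.P (n + 2) := by linarith [hpxy]
      have hxa : x < (c.a (n + 1) : ℤ) :=
        lt_of_mul_lt_mul_right t4 (by linarith : (0 : ℤ) ≤ (c.P (n + 2) : ℤ))
      have hxa' : (x : ℝ) ≤ (c.a (n + 1) : ℝ) - 1 := by
        have h5 : x ≤ (c.a (n + 1) : ℤ) - 1 := by omega
        calc (x : ℝ) ≤ ((c.a (n + 1) : ℤ) - 1 : ℤ) := by exact_mod_cast h5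
          _ = (c.a (n + 1) : ℝ) - 1 := by push_cast; ring
      have t5 : (x : ℝ) * del c (n + 2) ≤ ((c.a (n + 1) : ℝ) - 1) * del c (n + 2) :=
        mul_le_mul_of_nonneg_right hxa' hd2.le
      have hrec' : del c (n + 1) = (c.a (n + 1) : ℝ) * del c (n + 2) + del c (n + 3) := hrec
      linarith
  interval_cases y
  · -- y = 0
    have hx1 : 1 ≤ x := by
      by_contra hc
      push_neg at hc
      have hx0 : x ≤ 0 := by omega
      have t1 : x * (c.P (n + 2) : ℤ) ≤ 0 :=
        mul_nonpos_of_nonpos_of_nonneg hx0 (by linarith)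
      simp only [zero_mul, add_zero] at hpxy
      omega
    refine ⟨x.toNat, by omega, Or.inl ?_⟩
    have hk : (x.toNat : ℤ) = x := Int.toNat_of_nonneg (by omega)
    have h6 : (p : ℤ) = (x.toNat : ℤ) * c.P (n + 2) := by
      rw [hk]; simpa using hpxy
    exact_mod_cast h6
  · -- y = 1
    have hx1 : 1 ≤ x := by
      rcases lt_trichotomy x 0 with h | h | h
      · exfalso
        have hxm : x ≤ -1 := by omega
        have t1 : x * (c.P (n + 2) : ℤ) ≤ -1 * c.P (n + 2) :=
          mul_le_mul_of_nonneg_right hxm (by linarith)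
        simp only [one_mul] at hpxy
        linarith [hpxy]
      · exfalso
        have h7 : (p : ℤ) = c.P (n + 1) := by simpa [h] using hpxy
        have hpP : p = c.P (n + 1) := by exact_mod_cast h7
        rw [hpP] at hE
        exact absurd hE (lt_irrefl _)
      · omega
    refine ⟨x.toNat, by omega, Or.inr ?_⟩
    have hk : (x.toNat : ℤ) = x := Int.toNat_of_nonneg (by omega)
    have h6 : (p : ℤ) = (x.toNat : ℤ) * c.P (n + 2) + c.P (n + 1) := by
      rw [hk]; simpa using hpxy
    exact_mod_cast h6
end

section
/- Let α > 1 be irrational, A_α = {n : E(n) < 0}, B_α = {n : E(n) > 0}, and let S_α be the set of positive integers s such that no two distinct elements of A_α sum to s and no two distinct elements of B_α sum to s. If E(x) > 0, then x ∈ S_α if and only if there is no even positive integer z < 2x with 0 < E(z) < E(x). -/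
lemma int_mul_ne {α : ℝ} (hirr : Irrational α) (p q : ℤ) (hq : q ≠ 0) :
    (q : ℝ) * α ≠ (p : ℝ) := by
  intro h
  apply hirr
  refine ⟨(p : ℚ) / (q : ℚ), ?_⟩
  have hq' : (q : ℝ) ≠ 0 := Int.cast_ne_zero.mpr hq
  push_cast
  field_simp
  linarith [h]

lemma E_spec (α : ℝ) (n : ℕ) : (n : ℝ) = round ((n : ℝ) / α) * α + E α n := by
  unfold E; ring

lemma E_eq_of {α : ℝ} (hα : 0 < α) (n : ℕ) (k : ℤ) (y : ℝ)
    (h : (n : ℝ) = k * α + y) (h1 : -(α/2) < y) (h2 : y < α/2) :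
    E α n = y := by
  have hα' : α ≠ 0 := ne_of_gt hα
  have hdiv : (n : ℝ) / α = (k : ℝ) + y / α := by
    field_simp [h]; linarith [h]
  have hr : round ((n : ℝ) / α) = k := by
    rw [hdiv, round_intCast_add]
    have h0 : round (y / α) = 0 := by
      rw [round_eq]
      apply Int.floor_eq_zero_iff.mpr
      constructor
      · have : -(1/2 : ℝ) ≤ y / α := (le_div_iff₀ hα).mpr (by linarith)
        linarith
      · have : y / α < 1/2 := (div_lt_iff₀ hα).mpr (by linarith)
        linarith
    omega
  unfold E
  rw [hr, h]; ring

lemma E_bounds {α : ℝ} (hα : 1 < α) (hirr : Irrational α) (n : ℕ) (hn : 0 < n) :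
    -(α/2) < E α n ∧ E α n < α/2 ∧ E α n ≠ 0 := by
  have hα0 : (0:ℝ) < α := by linarith
  set r := round ((n : ℝ) / α) with hr
  have habs : |(n : ℝ)/α - r| ≤ 1/2 := abs_sub_round _
  have hE : E α n = ((n : ℝ)/α - r) * α := by
    unfold E
    rw [← hr]
    field_simp
  have h1 : -(α/2) ≤ E α n ∧ E α n ≤ α/2 := by
    rw [hE]
    constructor <;> nlinarith [abs_le.mp habs]
  refine ⟨?_, ?_, ?_⟩
  · rcases lt_or_eq_of_le h1.1 with h | h
    · exact h
    · exfalso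
      apply int_mul_ne hirr (2*n : ℕ) (2*r - 1) (by omega)
      have : (n : ℝ) = r * α + E α n := E_spec α n
      push_cast
      nlinarith [h, this]
  · rcases lt_or_eq_of_le h1.2 with h | h
    · exact h
    · exfalso
      apply int_mul_ne hirr (2*n : ℕ) (2*r + 1) (by omega)
      have : (n : ℝ) = r * α + E α n := E_spec α n
      push_cast
      nlinarith [h, this]
  · intro h
    have hspec : (n : ℝ) = r * α + E α n := E_spec α n
    have hrne : r ≠ 0 := by
      intro h0
      rw [h0] at hspec
      simp [h] at hspec
      have : n = 0 := by exact_mod_cast hspec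
      omega
    apply int_mul_ne hirr (n : ℕ) r hrne
    push_cast
    linarith [hspec, h]

lemma E_inj {α : ℝ} (hirr : Irrational α) {a b : ℕ}
    (h : E α a = E α b) : a = b := by
  set ra := round ((a : ℝ) / α) with hra
  set rb := round ((b : ℝ) / α) with hrb
  have ha : (a : ℝ) = ra * α + E α a := E_spec α a
  have hb : (b : ℝ) = rb * α + E α b := E_spec α b
  by_cases hre : ra = rb
  · have : (a : ℝ) = (b : ℝ) := by rw [ha, hb, h, hre]
    exact_mod_cast this
  · exfalso
    apply int_mul_ne hirr ((a : ℤ) - b) (ra - rb) (by omega)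
    push_cast
    linarith [ha, hb, h]

lemma existsZ_B {α : ℝ} (hα : 1 < α) (hirr : Irrational α) (x a b : ℕ)
    (hEx : 0 < E α x) (ha0 : 0 < a) (hb0 : 0 < b)
    (hEa : 0 < E α a) (hEb : 0 < E α b) (hlt : E α a < E α b) (hsum : a + b = x) :
    ∃ z : ℕ, 0 < z ∧ Even z ∧ z < 2 * x ∧ 0 < E α z ∧ E α z < E α x := by
  have hα0 : (0:ℝ) < α := by linarith
  have hx0 : 0 < x := by omega
  obtain ⟨xa1, xa2, -⟩ := E_bounds hα hirr a ha0
  obtain ⟨xb1, xb2, -⟩ := E_bounds hα hirr b hb0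
  obtain ⟨xx1, xx2, -⟩ := E_bounds hα hirr x hx0
  set ra := round ((a : ℝ)/α)
  set rb := round ((b : ℝ)/α)
  set rx := round ((x : ℝ)/α)
  have ha := E_spec α a
  have hb := E_spec α b
  have hxs := E_spec α x
  have hcast : (x : ℝ) = (a : ℝ) + b := by exact_mod_cast hsum.symm
  have hk : ((ra + rb - rx : ℤ) : ℝ) * α = E α x - E α a - E α b := by
    push_cast; nlinarith [ha, hb, hxs, hcast]
  have hk0 : (ra + rb - rx : ℤ) = 0 := by
    have l1 : ((ra + rb - rx : ℤ) : ℝ) < 1 := by nlinarith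
    have l2 : (-1 : ℝ) < ((ra + rb - rx : ℤ) : ℝ) := by nlinarith
    have l1' : (ra + rb - rx : ℤ) < 1 := by exact_mod_cast l1
    have l2' : (-1 : ℤ) < (ra + rb - rx : ℤ) := by exact_mod_cast l2
    omega
  rw [hk0] at hk
  push_cast at hk
  have hEsum : E α a + E α b = E α x := by linarith
  have hE2a : E α (2*a) = 2 * E α a := by
    apply E_eq_of hα0 (2*a) (2*ra)
    · push_cast; linarith [ha]
    · linarith
    · linarith
  exact ⟨2*a, by omega, even_two_mul a, by omega, by rw [hE2a]; linarith,
    by rw [hE2a]; linarith⟩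

lemma existsZ_A {α : ℝ} (hα : 1 < α) (hirr : Irrational α) (x a b : ℕ)
    (hEx : 0 < E α x) (ha0 : 0 < a) (hb0 : 0 < b)
    (hEa : E α a < 0) (hEb : E α b < 0) (hlt : E α a < E α b) (hsum : a + b = x) :
    ∃ z : ℕ, 0 < z ∧ Even z ∧ z < 2 * x ∧ 0 < E α z ∧ E α z < E α x := by
  have hα0 : (0:ℝ) < α := by linarith
  have hx0 : 0 < x := by omega
  obtain ⟨xa1, xa2, -⟩ := E_bounds hα hirr a ha0
  obtain ⟨xb1, xb2, -⟩ := E_bounds hα hirr b hb0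
  obtain ⟨xx1, xx2, -⟩ := E_bounds hα hirr x hx0
  set ra := round ((a : ℝ)/α)
  set rb := round ((b : ℝ)/α)
  set rx := round ((x : ℝ)/α)
  have ha := E_spec α a
  have hb := E_spec α b
  have hxs := E_spec α x
  have hcast : (x : ℝ) = (a : ℝ) + b := by exact_mod_cast hsum.symm
  have hk : ((ra + rb - rx : ℤ) : ℝ) * α = E α x - E α a - E α b := by
    push_cast; nlinarith [ha, hb, hxs, hcast]
  have hk0 : (ra + rb - rx : ℤ) = 1 := by
    have l1 : ((ra + rb - rx : ℤ) : ℝ) < 2 := by nlinarith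
    have l2 : (0 : ℝ) < ((ra + rb - rx : ℤ) : ℝ) := by nlinarith
    have l1' : (ra + rb - rx : ℤ) < 2 := by exact_mod_cast l1
    have l2' : (0 : ℤ) < (ra + rb - rx : ℤ) := by exact_mod_cast l2
    omega
  rw [hk0] at hk
  push_cast at hk
  have hEsum : E α a + E α b = E α x - α := by linarith
  have hE2a : E α (2*a) = 2 * E α a + α := by
    apply E_eq_of hα0 (2*a) (2*ra - 1)
    · push_cast; linarith [ha]
    · linarith
    · linarith
  exact ⟨2*a, by omega, even_two_mul a, by omega, by rw [hE2a]; linarith,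
    by rw [hE2a]; linarith⟩

set_option maxHeartbeats 1000000 in
/-- If `E x > 0`, then `x ∈ S_α` iff there is no even `z < 2x` with
`0 < E z < E x`. -/
theorem stmt6 (α : ℝ) (hα : 1 < α) (hirr : Irrational α) (x : ℕ)
    (hx : 0 < x) (hEx : 0 < E α x) :
    x ∈ Sset α ↔
      ¬∃ z : ℕ, 0 < z ∧ Even z ∧ z < 2 * x ∧ 0 < E α z ∧ E α z < E α x := by
  have hα0 : (0:ℝ) < α := by linarith
  obtain ⟨hxb1, hxb2, -⟩ := E_bounds hα hirr x hx
  constructor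
  · rintro ⟨-, hA, hB⟩ ⟨z, hz0, ⟨w, hzw⟩, hzx, hEz, hEzx⟩
    have hw0 : 0 < w := by omega
    have hwx : w < x := by omega
    obtain ⟨hwb1, hwb2, hwb3⟩ := E_bounds hα hirr w hw0
    obtain ⟨hzb1, hzb2, -⟩ := E_bounds hα hirr z hz0
    set rw' := round ((w:ℝ)/α)
    set rz := round ((z:ℝ)/α)
    set rx := round ((x:ℝ)/α)
    have hws := E_spec α w
    have hzs := E_spec α z
    have hxs := E_spec α x
    have hzcast : (z:ℝ) = (w:ℝ) + w := by exact_mod_cast hzw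
    have hbcast : ((x - w : ℕ) : ℝ) = (x:ℝ) - w := by
      push_cast [Nat.cast_sub hwx.le]; ring
    have hk : ((rz - 2*rw' : ℤ) : ℝ) * α = 2 * E α w - E α z := by
      push_cast; nlinarith [hws, hzs, hzcast]
    rcases hwb3.lt_or_gt with hEwneg | hEwpos
    · -- E w < 0 : k = -1, Ez = 2 Ew + α
      have hk0 : (rz - 2*rw' : ℤ) = -1 := by
        have l1 : ((rz - 2*rw' : ℤ) : ℝ) < 0 := by nlinarith
        have l2 : (-2 : ℝ) < ((rz - 2*rw' : ℤ) : ℝ) := by nlinarith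
        have l1' : (rz - 2*rw' : ℤ) < 0 := by exact_mod_cast l1
        have l2' : (-2 : ℤ) < (rz - 2*rw' : ℤ) := by exact_mod_cast l2
        omega
      rw [hk0] at hk
      push_cast at hk
      have hrel : E α z = 2 * E α w + α := by linarith
      have hEb : E α (x - w) = E α x - E α w - α := by
        apply E_eq_of hα0 (x - w) (rx - rw' + 1)
        · rw [hbcast]; push_cast; linarith [hws, hxs]
        · linarith
        · linarith
      apply hA w ⟨hw0, hEwneg⟩ (x - w) ⟨by omega, by rw [hEb]; linarith⟩
        (by
          intro h
          have : E α w = E α (x - w) := by rw [← h]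
          rw [hEb] at this
          linarith)
        (by omega)
    · -- E w > 0 : k = 0, Ez = 2 Ew
      have hk0 : (rz - 2*rw' : ℤ) = 0 := by
        have l1 : ((rz - 2*rw' : ℤ) : ℝ) < 1 := by nlinarith
        have l2 : (-1 : ℝ) < ((rz - 2*rw' : ℤ) : ℝ) := by nlinarith
        have l1' : (rz - 2*rw' : ℤ) < 1 := by exact_mod_cast l1
        have l2' : (-1 : ℤ) < (rz - 2*rw' : ℤ) := by exact_mod_cast l2
        omega
      rw [hk0] at hk
      push_cast at hk
      have hrel : E α z = 2 * E α w := by linarith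
      have hEb : E α (x - w) = E α x - E α w := by
        apply E_eq_of hα0 (x - w) (rx - rw')
        · rw [hbcast]; push_cast; linarith [hws, hxs]
        · linarith
        · linarith
      apply hB w ⟨hw0, hEwpos⟩ (x - w) ⟨by omega, by rw [hEb]; linarith⟩
        (by
          intro h
          have : E α w = E α (x - w) := by rw [← h]
          rw [hEb] at this
          linarith)
        (by omega)
  · intro hnz
    refine ⟨hx, ?_, ?_⟩
    · rintro a ⟨ha0, hEa⟩ b ⟨hb0, hEb⟩ hab hsum
      apply hnz
      have hne : E α a ≠ E α b := fun h => hab (E_inj hirr h)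
      rcases hne.lt_or_gt with h | h
      · exact existsZ_A hα hirr x a b hEx ha0 hb0 hEa hEb h hsum
      · exact existsZ_A hα hirr x b a hEx hb0 ha0 hEb hEa h (by omega)
    · rintro a ⟨ha0, hEa⟩ b ⟨hb0, hEb⟩ hab hsum
      apply hnz
      have hne : E α a ≠ E α b := fun h => hab (E_inj hirr h)
      rcases hne.lt_or_gt with h | h
      · exact existsZ_B hα hirr x a b hEx ha0 hb0 hEa hEb h hsum
      · exact existsZ_B hα hirr x b a hEx hb0 ha0 hEb hEa h (by omega)
end

section
/- With notation as above, if E(x) > 0 then x ∈ S_α if and only if there is no positive integer y < x with y ≠ x/2 satisfying either 0 < E(y) < E(x) or 0 < E(y) + α/2 < E(x). -/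
lemma E_decomp (α : ℝ) (n : ℕ) : (n:ℝ) = round ((n:ℝ)/α) * α + E α n := by
  unfold E; ring

lemma not_int_mul {α : ℝ} (hirr : Irrational α) {m : ℤ} (hm : m ≠ 0) (c : ℤ)
    (h : (m:ℝ) * α = c) : False := by
  have hm' : (m:ℝ) ≠ 0 := Int.cast_ne_zero.mpr hm
  refine hirr ⟨(c:ℚ)/(m:ℚ), ?_⟩
  push_cast
  rw [div_eq_iff hm']
  linear_combination -h

lemma E_abs_lt {α : ℝ} (hα : 1 < α) (hirr : Irrational α) (n : ℕ) :
    |E α n| < α/2 := by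
  have hα0 : (0:ℝ) < α := by linarith
  have hle : |E α n| ≤ α/2 := by
    have h := abs_sub_round ((n:ℝ)/α)
    have hE : E α n = ((n:ℝ)/α - round ((n:ℝ)/α)) * α := by
      unfold E; field_simp
    rw [hE, abs_mul, abs_of_pos hα0]
    nlinarith [abs_nonneg ((n:ℝ)/α - round ((n:ℝ)/α))]
  rcases lt_or_eq_of_le hle with h | h
  · exact h
  exfalso
  have hd := E_decomp α n
  rcases (abs_eq (by linarith : (0:ℝ) ≤ α/2)).mp h with h' | h'
  · refine not_int_mul hirr (m := 2 * round ((n:ℝ)/α) + 1) (by omega) (2*n) ?_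
    push_cast
    linear_combination -2 * hd - 2 * h'
  · refine not_int_mul hirr (m := 2 * round ((n:ℝ)/α) - 1) (by omega) (2*n) ?_
    push_cast
    linear_combination -2 * hd - 2 * h'

lemma E_eq {α : ℝ} (hα : 1 < α) (hirr : Irrational α) (n : ℕ) (r : ℤ) {t : ℝ}
    (h : (n:ℝ) = r * α + t) (ht : |t| < α/2) : E α n = t := by
  have h1 := E_abs_lt hα hirr n
  have h2 := E_decomp α n
  rw [abs_lt] at h1 ht
  have hα0 : (0:ℝ) < α := by linarith
  have h3 : E α n - t = ((r - round ((n:ℝ)/α) : ℤ):ℝ) * α := by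
    push_cast
    linear_combination h - h2
  have h4 : (-1:ℝ) * α < ((r - round ((n:ℝ)/α) : ℤ):ℝ) * α := by rw [← h3]; linarith
  have h5 : ((r - round ((n:ℝ)/α) : ℤ):ℝ) * α < 1 * α := by rw [← h3]; linarith
  have h6 : (-1:ℝ) < ((r - round ((n:ℝ)/α) : ℤ):ℝ) := lt_of_mul_lt_mul_right h4 hα0.le
  have h7 : ((r - round ((n:ℝ)/α) : ℤ):ℝ) < 1 := lt_of_mul_lt_mul_right h5 hα0.le
  have h8 : (-1:ℤ) < r - round ((n:ℝ)/α) := by exact_mod_cast h6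
  have h9 : r - round ((n:ℝ)/α) < 1 := by exact_mod_cast h7
  have h10 : r - round ((n:ℝ)/α) = 0 := by omega
  rw [h10] at h3
  simp at h3
  linarith

lemma E_add (α : ℝ) {x y z : ℕ} (h : y + z = x) :
    ∃ k : ℤ, E α x = E α y + E α z + (k:ℝ) * α := by
  refine ⟨round ((y:ℝ)/α) + round ((z:ℝ)/α) - round ((x:ℝ)/α), ?_⟩
  have hx := E_decomp α x
  have hy := E_decomp α y
  have hz := E_decomp α z
  have hc : (x:ℝ) = (y:ℝ) + (z:ℝ) := by exact_mod_cast congrArg (Nat.cast : ℕ → ℝ) h.symm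
  push_cast
  linear_combination -hx + hy + hz + hc

/-- If `E x > 0`, then `x ∈ S_α` iff there is no `y < x` with `y ≠ x/2` and
either `0 < E y < E x` or `0 < E y + α/2 < E x`. -/
theorem stmt7 (α : ℝ) (hα : 1 < α) (hirr : Irrational α) (x : ℕ)
    (hx : 0 < x) (hEx : 0 < E α x) :
    x ∈ Sset α ↔
      ¬∃ y : ℕ, 0 < y ∧ y < x ∧ 2 * y ≠ x ∧
        ((0 < E α y ∧ E α y < E α x) ∨
         (0 < E α y + α / 2 ∧ E α y + α / 2 < E α x)) := by
  have hα0 : (0:ℝ) < α := by linarith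
  have hxlt := E_abs_lt hα hirr x
  rw [abs_lt] at hxlt
  constructor
  · rintro hS ⟨y, hy0, hyx, h2y, hcase⟩
    obtain ⟨z, hz⟩ : ∃ z, y + z = x := ⟨x - y, by omega⟩
    have hz0 : 0 < z := by omega
    have hyz : y ≠ z := by omega
    have hylt := E_abs_lt hα hirr y
    rw [abs_lt] at hylt
    have hcast : (x:ℝ) = (y:ℝ) + (z:ℝ) := by exact_mod_cast congrArg (Nat.cast : ℕ → ℝ) hz.symm
    have hxd := E_decomp α x
    have hyd := E_decomp α y
    rcases hcase with ⟨hEy0, hEyx⟩ | ⟨hEy0, hEyx⟩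
    · -- both in B
      have hEz : E α z = E α x - E α y := by
        apply E_eq hα hirr z (round ((x:ℝ)/α) - round ((y:ℝ)/α))
        · push_cast
          linear_combination hxd - hyd - hcast
        · rw [abs_lt]
          constructor <;> linarith
      exact hS.2.2 y ⟨hy0, hEy0⟩ z ⟨hz0, by rw [hEz]; linarith⟩ hyz hz
    · -- both in A
      have hEy' : E α y < 0 := by linarith
      have hEz : E α z = E α x - E α y - α := by
        apply E_eq hα hirr z (round ((x:ℝ)/α) - round ((y:ℝ)/α) + 1)
        · push_cast
          linear_combination hxd - hyd - hcast
        · rw [abs_lt]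
          constructor <;> linarith
      exact hS.2.1 y ⟨hy0, hEy'⟩ z ⟨hz0, by rw [hEz]; linarith⟩ hyz hz
  · intro hno
    refine ⟨hx, ?_, ?_⟩
    · -- sums from A
      rintro a ⟨ha0, hEa⟩ b ⟨hb0, hEb⟩ hab hsum
      have halt := E_abs_lt hα hirr a; rw [abs_lt] at halt
      have hblt := E_abs_lt hα hirr b; rw [abs_lt] at hblt
      obtain ⟨k, hk⟩ := E_add α hsum
      have hk1 : k = 1 := by
        have h1 : (0:ℝ) * α < (k:ℝ) * α := by rw [zero_mul]; linarith
        have h2 : (k:ℝ) * α < 2 * α := by linarith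
        have h3 : (0:ℝ) < (k:ℝ) := lt_of_mul_lt_mul_right h1 hα0.le
        have h4 : (k:ℝ) < 2 := lt_of_mul_lt_mul_right h2 hα0.le
        have h5 : (0:ℤ) < k := by exact_mod_cast h3
        have h6 : k < 2 := by exact_mod_cast h4
        omega
      subst hk1
      apply hno
      refine ⟨a, ha0, by omega, by omega, Or.inr ⟨by linarith, ?_⟩⟩
      push_cast at hk
      linarith
    · -- sums from B
      rintro a ⟨ha0, hEa⟩ b ⟨hb0, hEb⟩ hab hsum
      have halt := E_abs_lt hα hirr a; rw [abs_lt] at halt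
      have hblt := E_abs_lt hα hirr b; rw [abs_lt] at hblt
      obtain ⟨k, hk⟩ := E_add α hsum
      have hk0 : k = 0 := by
        have h1 : (-1:ℝ) * α < (k:ℝ) * α := by linarith
        have h2 : (k:ℝ) * α < 1 * α := by linarith
        have h3 : (-1:ℝ) < (k:ℝ) := lt_of_mul_lt_mul_right h1 hα0.le
        have h4 : (k:ℝ) < 1 := lt_of_mul_lt_mul_right h2 hα0.le
        have h5 : (-1:ℤ) < k := by exact_mod_cast h3
        have h6 : k < 1 := by exact_mod_cast h4
        omega
      subst hk0
      apply hno
      refine ⟨a, ha0, by omega, by omega, Or.inl ⟨hEa, ?_⟩⟩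
      push_cast at hk
      linarith
end

section
/- Let α > 1 be irrational with convergent numerators p_n and partial quotients a_n, and S_α the avoided set of the partition {A_α, B_α}. Then 2p_n ∈ S_α if and only if p_n is odd and either (i) p_{n+1} is odd and a_{n+1} ≥ 3, or (ii) p_{n+1} is even and a_{n+1} ≥ 2, or (iii) p_n = 1. -/
namespace CF
variable {α : ℝ} (c : CF α)

def QQ : ℕ → ℕ
  | 0 => 1
  | 1 => 0
  | n + 2 => c.q n

lemma P_rec' (k : ℕ) : c.P (k+2) = c.a k * c.P (k+1) + c.P k := by
  match k with
  | 0 => show c.p 0 = c.a 0 * 1 + 0; rw [c.p0]; ring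
  | 1 => show c.p 1 = c.a 1 * c.p 0 + 1; rw [c.p1, c.p0]
  | n + 2 => exact c.p_rec n

lemma QQ_rec (k : ℕ) : c.QQ (k+2) = c.a k * c.QQ (k+1) + c.QQ k := by
  match k with
  | 0 => show c.q 0 = c.a 0 * 0 + 1; rw [c.q0]; ring
  | 1 => show c.q 1 = c.a 1 * c.q 0 + 0; rw [c.q1, c.q0]; ring
  | n + 2 => exact c.q_rec n

lemma P_one_le (k : ℕ) : 1 ≤ c.P (k+1) := by
  induction k using Nat.strong_induction_on with
  | _ k ih =>
    match k with
    | 0 => exact le_refl 1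
    | 1 =>
      rw [c.P_rec' 0]
      have h0 := c.ha 0
      have h1 : c.P 1 = 1 := rfl
      have h2 : c.P 0 = 0 := rfl
      nlinarith
    | n + 2 =>
      rw [c.P_rec' (n+1)]
      have h1 := ih (n+1) (by omega)
      nlinarith [c.ha (n+1)]

lemma P_succ_lt (k : ℕ) : c.P (k+2) < c.P (k+3) := by
  have h := c.P_rec' (k+1)
  have h1 := c.P_one_le k
  have h2 := c.P_one_le (k+1)
  have h3 := c.ha (k+1)
  show c.P (k+2) < c.P (k+1+2)
  nlinarith

lemma P_two_le (k : ℕ) : 2 ≤ c.P (k+3) := by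
  induction k with
  | zero =>
    rw [c.P_rec' 1]
    have := c.ha 1
    have h1 : c.P 2 = c.a 0 := by rw [show c.P 2 = c.p 0 from rfl, c.p0]
    have h2 : c.P 1 = 1 := rfl
    have h0 := c.ha 0
    nlinarith
  | succ n ih =>
    have h := c.P_succ_lt (n+1)
    have e : c.P (n+1+2) = c.P (n+3) := rfl
    omega

lemma P_lt_of_two_le (k : ℕ) (h : 2 ≤ c.P (k+2)) : c.P (k+1) < c.P (k+2) := by
  match k with
  | 0 =>
    have h1 : c.P (0+1) = 1 := rfl
    omega
  | n + 1 =>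
    have h1 := c.P_rec' (n+1)
    have h2 := c.P_one_le (n+1)
    have h3 := c.ha (n+1)
    have h4 := c.P_one_le n
    show c.P (n+2) < c.P (n+1+2)
    nlinarith

lemma det (k : ℕ) : (c.P k : ℤ) * c.QQ (k+1) - c.P (k+1) * c.QQ k = (-1)^(k+1) := by
  induction k with
  | zero => show (0:ℤ) * 0 - 1 * 1 = (-1)^1; ring
  | succ n ih =>
    have hp' : (c.P (n+2) : ℤ) = c.a n * c.P (n+1) + c.P n := by exact_mod_cast c.P_rec' n
    have hq' : (c.QQ (n+2) : ℤ) = c.a n * c.QQ (n+1) + c.QQ n := by exact_mod_cast c.QQ_rec n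
    show (c.P (n+1) : ℤ) * c.QQ (n+2) - c.P (n+2) * c.QQ (n+1) = (-1)^(n+2)
    rw [hp', hq']
    have : ((-1:ℤ))^(n+2) = -((-1)^(n+1)) := by ring
    rw [this, ← ih]
    ring

end CF

namespace CF
variable {α : ℝ} (c : CF α)

lemma t_lt (k : ℕ) : (c.a k : ℝ) ≤ c.t k ∧ c.t k < c.a k + 1 := by
  constructor
  · rw [c.floor_t k]; exact Int.floor_le _
  · rw [c.floor_t k]; exact Int.lt_floor_add_one _

lemma t_gt_one (hα : 1 < α) (k : ℕ) : 1 < c.t k := by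
  match k with
  | 0 => rw [c.t0]; exact hα
  | k + 1 =>
    have h1 := c.t_rec k
    have h2 := (c.t_lt k).1
    have h3 := (c.t_lt k).2
    have h4 : (1:ℝ) ≤ c.a k := by exact_mod_cast c.ha k
    -- 1 / t (k+1) = t k - a k ∈ [0, 1)
    have h5 : 1 / c.t (k+1) = c.t k - c.a k := by linarith
    have h6 : 0 ≤ 1 / c.t (k+1) := by rw [h5]; linarith
    have h7 : 1 / c.t (k+1) < 1 := by rw [h5]; linarith
    have h8 : c.t (k+1) ≠ 0 := by
      intro h
      rw [h] at h5
      simp at h5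
      have := c.floor_t (k+1)
      rw [h] at this
      have h9 : (1:ℝ) ≤ c.a (k+1) := by exact_mod_cast c.ha (k+1)
      simp at this
      rw [this] at h9
      norm_num at h9
    have h9 : 0 < 1 / c.t (k+1) := by
      rcases lt_or_eq_of_le h6 with h | h
      · exact h
      · exact absurd h.symm (one_div_ne_zero h8)
    have h10 : 0 < c.t (k+1) := one_div_pos.mp h9
    rw [div_lt_one h10] at h7
    exact h7

noncomputable def Gg (k : ℕ) : ℝ := (c.QQ k : ℝ) * α - c.P k

lemma Gg_zero : c.Gg 0 = α := by simp [Gg, CF.P, CF.QQ]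

lemma Gg_one : c.Gg 1 = -1 := by simp [Gg, CF.P, CF.QQ]

lemma Gg_rec (k : ℕ) : c.Gg (k+2) = c.a k * c.Gg (k+1) + c.Gg k := by
  have hp : (c.P (k+2) : ℝ) = c.a k * c.P (k+1) + c.P k := by exact_mod_cast c.P_rec' k
  have hq : (c.QQ (k+2) : ℝ) = c.a k * c.QQ (k+1) + c.QQ k := by exact_mod_cast c.QQ_rec k
  simp only [Gg]
  rw [hp, hq]; ring

lemma Gg_eq (hα : 1 < α) (k : ℕ) : c.Gg k = -(c.t k) * c.Gg (k+1) := by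
  induction k with
  | zero => rw [c.Gg_zero, c.Gg_one, c.t0]; ring
  | succ n ih =>
    have h1 := c.Gg_rec n
    have h2 := c.t_rec n
    have h3 : c.t (n+1) ≠ 0 := by have := c.t_gt_one hα (n+1); linarith
    have h4 : c.t n ≠ 0 := by have := c.t_gt_one hα n; linarith
    -- from ih : Gg n = -(t n) Gg (n+1), and Gg (n+2) = a n Gg (n+1) + Gg n
    -- Gg (n+2) = (a n - t n) Gg (n+1) = -(1/t(n+1)) Gg (n+1)
    have h5 : c.Gg (n+2) = ((c.a n : ℝ) - c.t n) * c.Gg (n+1) := by rw [h1, ih]; ring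
    have h6 : (c.a n : ℝ) - c.t n = -(1 / c.t (n+1)) := by rw [h2]; ring
    rw [h6] at h5
    field_simp at h5 ⊢
    linarith [h5]

lemma Gg_sign (hα : 1 < α) (k : ℕ) : 0 < (-1:ℝ)^k * c.Gg k := by
  induction k with
  | zero => rw [c.Gg_zero]; simpa using lt_trans one_pos hα
  | succ n ih =>
    have h1 := c.Gg_eq hα n
    have ht := c.t_gt_one hα n
    have h2 : c.Gg (n+1) = -c.Gg n / c.t n := by
      rw [h1]; field_simp
    have e : (-1:ℝ)^(n+1) * c.Gg (n+1) = ((-1)^n * c.Gg n) / c.t n := by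
      rw [h2]; ring
    rw [e]
    exact div_pos ih (by linarith)

lemma Gg_ne (hα : 1 < α) (k : ℕ) : c.Gg k ≠ 0 := by
  have := c.Gg_sign hα k
  intro h; rw [h] at this; simp at this

noncomputable def eps (k : ℕ) : ℝ := |c.Gg k| / α

lemma eps_pos (hα : 1 < α) (k : ℕ) : 0 < c.eps k := by
  have h1 := c.Gg_ne hα k
  have : 0 < α := by linarith
  unfold eps; positivity

lemma eps_lt (hα : 1 < α) (k : ℕ) : c.eps (k+1) < c.eps k := by
  have h1 := c.Gg_eq hα k
  have ht := c.t_gt_one hα k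
  have h2 : |c.Gg k| = c.t k * |c.Gg (k+1)| := by
    rw [h1, abs_mul, abs_neg, abs_of_pos (by linarith : (0:ℝ) < c.t k)]
  have h3 : 0 < |c.Gg (k+1)| := abs_pos.mpr (c.Gg_ne hα (k+1))
  have h4 : |c.Gg (k+1)| < |c.Gg k| := by rw [h2]; nlinarith
  unfold eps
  have hA : (0:ℝ) < α := by linarith
  exact div_lt_div_of_pos_right h4 hA

end CF
namespace CF
variable {α : ℝ} (c : CF α)

noncomputable def Ff (k : ℕ) : ℝ := (c.P k : ℝ) * α⁻¹ - c.QQ k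

lemma Ff_eq (hα : 1 < α) (k : ℕ) : c.Ff k = (-1:ℝ)^(k+1) * c.eps k := by
  have hA : (0:ℝ) < α := by linarith
  have h1 : c.Ff k = -c.Gg k / α := by
    unfold Ff Gg; field_simp; ring
  set y := (-1:ℝ)^k * c.Gg k with hy
  have hsign : 0 < y := c.Gg_sign hα k
  have hGg : c.Gg k = (-1:ℝ)^k * y := by
    rw [hy, ← mul_assoc, ← mul_pow]; norm_num
  have habs : |c.Gg k| = y := by
    rw [hGg, abs_mul, abs_pow, abs_neg, abs_one, one_pow, one_mul, abs_of_pos hsign]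
  have he : c.eps k = y / α := by unfold eps; rw [habs]
  rw [h1, hGg, he]; ring

lemma sum_one (hα : 1 < α) (k : ℕ) :
    (c.P (k+1) : ℝ) * c.eps k + (c.P k : ℝ) * c.eps (k+1) = 1 := by
  have hdet : ((c.P k : ℝ) * c.QQ (k+1) - c.P (k+1) * c.QQ k) = (-1:ℝ)^(k+1) := by
    exact_mod_cast congrArg (fun z : ℤ => (z : ℝ)) (c.det k)
  have h1 : (c.P (k+1) : ℝ) * c.Ff k - (c.P k : ℝ) * c.Ff (k+1) = (-1:ℝ)^(k+1) := by
    unfold Ff; rw [← hdet]; ring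
  rw [c.Ff_eq hα k, c.Ff_eq hα (k+1)] at h1
  have h2 : (-1:ℝ)^(k+2) = -(-1:ℝ)^(k+1) := by ring
  rw [h2] at h1
  have h3 : (-1:ℝ)^(k+1) * ((c.P (k+1) : ℝ) * c.eps k + (c.P k : ℝ) * c.eps (k+1))
      = (-1:ℝ)^(k+1) * 1 := by linear_combination h1
  have h4 : ((-1:ℝ)^(k+1)) ≠ 0 := by
    intro h; have := pow_eq_zero_iff (n := k+1) (by omega) |>.mp h; norm_num at this
  exact mul_left_cancel₀ h4 h3

lemma uv_exists (k : ℕ) (j r : ℤ) :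
    ∃ u v : ℤ, u * c.P k + v * c.P (k+1) = j ∧ u * c.QQ k + v * c.QQ (k+1) = r := by
  set d : ℤ := (-1)^(k+1) with hd
  have hd2 : d * d = 1 := by rw [hd, ← mul_pow]; norm_num
  have hdet := c.det k
  refine ⟨d * (j * c.QQ (k+1) - r * c.P (k+1)), d * (r * c.P k - j * c.QQ k), ?_, ?_⟩
  · linear_combination (d*j) * hdet + j * hd2
  · linear_combination (d*r) * hdet + r * hd2

lemma abs_lin (hα : 1 < α) (k : ℕ) (u v j r : ℤ)
    (hju : u * c.P k + v * c.P (k+1) = j) (hr : u * c.QQ k + v * c.QQ (k+1) = r) :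
    |(j:ℝ) * α⁻¹ - r| = |(u:ℝ) * c.eps k - (v:ℝ) * c.eps (k+1)| := by
  have hjR : (j:ℝ) = u * c.P k + v * c.P (k+1) := by exact_mod_cast hju.symm
  have hrR : (r:ℝ) = u * c.QQ k + v * c.QQ (k+1) := by exact_mod_cast hr.symm
  have hid : (j:ℝ) * α⁻¹ - r = (u:ℝ) * c.Ff k + (v:ℝ) * c.Ff (k+1) := by
    rw [hjR, hrR]; unfold Ff; ring
  rw [hid, c.Ff_eq hα k, c.Ff_eq hα (k+1)]
  have h2 : (u:ℝ) * ((-1:ℝ)^(k+1) * c.eps k) + (v:ℝ) * ((-1:ℝ)^(k+2) * c.eps (k+1))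
      = (-1:ℝ)^(k+1) * ((u:ℝ) * c.eps k - (v:ℝ) * c.eps (k+1)) := by ring
  rw [h2, abs_mul, abs_pow, abs_neg, abs_one, one_pow, one_mul]

lemma best (hα : 1 < α) (k : ℕ) (j r : ℤ) (h0 : 0 < j) (h1 : j < (c.P (k+1) : ℤ)) :
    c.eps k ≤ |(j:ℝ) * α⁻¹ - r| := by
  obtain ⟨u, v, hju, hr⟩ := c.uv_exists k j r
  rw [c.abs_lin hα k u v j r hju hr]
  have hek := c.eps_pos hα k
  have hek1 := c.eps_pos hα (k+1)
  have hP1 : (1:ℤ) ≤ (c.P (k+1) : ℤ) := by exact_mod_cast c.P_one_le k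
  have hP0 : (0:ℤ) ≤ (c.P k : ℤ) := by positivity
  rcases lt_trichotomy v 0 with hv | hv | hv
  · rcases lt_trichotomy u 0 with hu | hu | hu
    · -- u<0, v<0 : j ≤ 0, contradiction
      exfalso; nlinarith
    · -- u=0: j = v * P(k+1) < 0 contradiction
      exfalso; rw [hu] at hju; nlinarith
    · -- u>0, v<0 : same-sign sum
      have huR : (1:ℝ) ≤ (u:ℝ) := by exact_mod_cast hu
      have hv' : v ≤ -1 := by omega
      have hvR : (v:ℝ) ≤ -1 := by exact_mod_cast hv'
      have : c.eps k ≤ (u:ℝ) * c.eps k - (v:ℝ) * c.eps (k+1) := by nlinarith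
      exact le_trans this (le_abs_self _)
  · -- v = 0
    rw [hv] at hju
    have hu : u ≠ 0 := by intro h; rw [h] at hju; omega
    have huR : (1:ℝ) ≤ |(u:ℝ)| := by
      have := Int.one_le_abs hu
      calc (1:ℝ) ≤ (|u| : ℤ) := by exact_mod_cast this
      _ = |(u:ℝ)| := by push_cast; rfl
    rw [hv]
    push_cast
    rw [zero_mul, sub_zero, abs_mul, abs_of_pos hek]
    nlinarith
  · rcases lt_trichotomy u 0 with hu | hu | hu
    · -- u<0, v>0
      have hu' : u ≤ -1 := by omega
      have huR : (u:ℝ) ≤ -1 := by exact_mod_cast hu'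
      have hvR : (1:ℝ) ≤ (v:ℝ) := by exact_mod_cast hv
      have : c.eps k ≤ -((u:ℝ) * c.eps k - (v:ℝ) * c.eps (k+1)) := by nlinarith
      exact le_trans this (neg_le_abs _)
    · -- u=0 : j = v P(k+1) ≥ P(k+1) contradiction
      exfalso; rw [hu] at hju; nlinarith
    · -- u>0, v>0 : j ≥ P(k+1) contradiction
      exfalso; nlinarith
end CF
namespace CF
variable {α : ℝ} (c : CF α)

lemma classify (hα : 1 < α) (k : ℕ) (j r : ℤ) (h0 : 0 < j) (h1 : j < 2 * (c.P (k+2) : ℤ))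
    (h2 : |(j:ℝ) * α⁻¹ - r| < 2 * c.eps (k+2)) :
    (j = c.P (k+2) ∧ r = c.QQ (k+2)) ∨ (j = c.P (k+3) ∧ r = c.QQ (k+3)) ∨
    (j = (c.P (k+3) : ℤ) - c.P (k+2) ∧ r = (c.QQ (k+3) : ℤ) - c.QQ (k+2)) ∨
    (j = 2 * (c.P (k+3) : ℤ) - c.P (k+2) ∧ r = 2 * (c.QQ (k+3) : ℤ) - c.QQ (k+2)) := by
  obtain ⟨u, v, hju, hr⟩ := c.uv_exists (k+2) j r
  rw [c.abs_lin hα (k+2) u v j r hju hr] at h2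
  have e1 : c.eps (k+2+1) = c.eps (k+3) := rfl
  rw [e1] at h2
  have hju' : u * (c.P (k+2) : ℤ) + v * (c.P (k+3) : ℤ) = j := hju
  have hr' : u * (c.QQ (k+2) : ℤ) + v * (c.QQ (k+3) : ℤ) = r := hr
  have hek := c.eps_pos hα (k+2)
  have hek1 := c.eps_pos hα (k+3)
  have heklt := c.eps_lt hα (k+2)
  have heklt' : c.eps (k+3) < c.eps (k+2) := by rw [← e1]; exact heklt
  have hPlt : (c.P (k+2) : ℤ) < (c.P (k+3) : ℤ) := by exact_mod_cast c.P_succ_lt k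
  have hP1 : (1:ℤ) ≤ (c.P (k+2) : ℤ) := by exact_mod_cast c.P_one_le (k+1)
  rcases lt_trichotomy v 0 with hv | hv | hv
  · rcases lt_trichotomy u 0 with hu | hu | hu
    · exfalso; nlinarith
    · exfalso; rw [hu] at hju'; nlinarith
    · -- u>0, v<0 : u = 1 then j < 0
      exfalso
      have huR : (1:ℝ) ≤ (u:ℝ) := by exact_mod_cast hu
      have hv' : v ≤ -1 := by omega
      have hvR : (v:ℝ) ≤ -1 := by exact_mod_cast hv'
      have hx : 0 < (u:ℝ) * c.eps (k+2) - (v:ℝ) * c.eps (k+3) := by nlinarith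
      rw [abs_of_pos hx] at h2
      have hu2 : (u:ℝ) < 2 := by nlinarith
      have hu2' : u = 1 := by
        have : u < 2 := by exact_mod_cast hu2
        omega
      rw [hu2'] at hju'
      nlinarith
  · -- v = 0 : u = 1, first case
    rw [hv] at hju' hr' h2
    push_cast at h2
    rw [zero_mul, sub_zero, abs_mul, abs_of_pos hek] at h2
    have hu : 1 ≤ u := by nlinarith
    have huR : (0:ℝ) < (u:ℝ) := by exact_mod_cast hu
    rw [abs_of_pos huR] at h2
    have hu2 : (u:ℝ) < 2 := by nlinarith
    have hu2' : u = 1 := by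
      have : u < 2 := by exact_mod_cast hu2
      omega
    rw [hu2'] at hju' hr'
    left; constructor <;> omega
  · rcases lt_trichotomy u 0 with hu | hu | hu
    · -- u<0, v>0 : u = -1, v ∈ {1,2}
      have hu' : u ≤ -1 := by omega
      have huR : (u:ℝ) ≤ -1 := by exact_mod_cast hu'
      have hv' : (1:ℤ) ≤ v := hv
      have hvR : (1:ℝ) ≤ (v:ℝ) := by exact_mod_cast hv'
      have hx : (u:ℝ) * c.eps (k+2) - (v:ℝ) * c.eps (k+3) < 0 := by nlinarith
      rw [abs_of_neg hx] at h2
      have hu2 : -2 < (u:ℝ) := by nlinarith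
      have hu1 : u = -1 := by
        have : -2 < u := by exact_mod_cast hu2
        omega
      rw [hu1] at hju' hr'
      have hv3 : v < 3 := by nlinarith
      interval_cases v
      · right; right; left; constructor <;> omega
      · right; right; right; constructor <;> omega
    · rw [hu] at hju' hr'
      have hv2 : v < 2 := by nlinarith
      have hv1 : v = 1 := by omega
      rw [hv1] at hju' hr'
      right; left; constructor <;> omega
    · exfalso
      have hu' : (1:ℤ) ≤ u := hu
      have hv' : (1:ℤ) ≤ v := hv
      nlinarith
end CF
namespace CF

variable {α : ℝ}

lemma fract_irr (hirr : Irrational α) (m : ℕ) (hm : 0 < m) :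
    Irrational (Int.fract ((m:ℝ) * α⁻¹)) := by
  have hβ : Irrational α⁻¹ := hirr.inv
  have hz : Irrational ((m:ℝ) * α⁻¹) := by
    have := hβ.natCast_mul (Nat.pos_iff_ne_zero.mp hm)
    exact this
  have h3 : Irrational ((m:ℝ) * α⁻¹ - ⌊(m:ℝ) * α⁻¹⌋) := hz.sub_intCast _
  rwa [Int.self_sub_floor] at h3

lemma fract_pos (hirr : Irrational α) (m : ℕ) (hm : 0 < m) :
    0 < Int.fract ((m:ℝ) * α⁻¹) := by
  rcases lt_or_eq_of_le (Int.fract_nonneg ((m:ℝ) * α⁻¹)) with h | h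
  · exact h
  · exfalso
    have := (fract_irr hirr m hm).ne_int 0
    rw [← h] at this
    simp at this

lemma fract_ne_half (hirr : Irrational α) (m : ℕ) (hm : 0 < m) :
    Int.fract ((m:ℝ) * α⁻¹) ≠ 1/2 := by
  intro h
  have h2 := (fract_irr hirr m hm).ne_rat (1/2)
  rw [h] at h2
  apply h2
  norm_num

lemma E_eq_low (hα : 1 < α) (m : ℕ) (hf : Int.fract ((m:ℝ) * α⁻¹) < 1/2) :
    E α m = Int.fract ((m:ℝ) * α⁻¹) * α := by
  have hA : (0:ℝ) < α := by linarith
  set z := (m:ℝ) * α⁻¹ with hz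
  have hdiv : (m:ℝ) / α = z := by rw [hz, div_eq_mul_inv]
  have hround : round z = ⌊z⌋ := by
    rw [round_eq, Int.floor_eq_iff]
    constructor
    · have := Int.floor_le z; linarith
    · have h1 : z - ⌊z⌋ = Int.fract z := Int.self_sub_floor z
      linarith [hf, h1.symm ▸ hf]
  have hm' : (m:ℝ) = z * α := by rw [hz]; field_simp
  unfold E
  rw [hdiv, hround, hm']
  have : Int.fract z = z - ⌊z⌋ := (Int.self_sub_floor z).symm
  rw [this]; ring

lemma E_eq_high (hα : 1 < α) (m : ℕ) (hf : 1/2 < Int.fract ((m:ℝ) * α⁻¹)) :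
    E α m = (Int.fract ((m:ℝ) * α⁻¹) - 1) * α := by
  have hA : (0:ℝ) < α := by linarith
  set z := (m:ℝ) * α⁻¹ with hz
  have hdiv : (m:ℝ) / α = z := by rw [hz, div_eq_mul_inv]
  have h1 : z - ⌊z⌋ = Int.fract z := Int.self_sub_floor z
  have hflt := Int.fract_lt_one z
  have hround : round z = ⌊z⌋ + 1 := by
    rw [round_eq, Int.floor_eq_iff]
    constructor
    · push_cast; linarith
    · push_cast; linarith
  have hm' : (m:ℝ) = z * α := by rw [hz]; field_simp
  unfold E
  rw [hdiv, hround, hm']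
  have : Int.fract z = z - ⌊z⌋ := h1.symm
  rw [this]; push_cast; ring

lemma mem_A_iff (hα : 1 < α) (hirr : Irrational α) (m : ℕ) (hm : 0 < m) :
    m ∈ Aset α ↔ 1/2 < Int.fract ((m:ℝ) * α⁻¹) := by
  have hA : (0:ℝ) < α := by linarith
  constructor
  · rintro ⟨-, hE⟩
    by_contra h
    have hlt : Int.fract ((m:ℝ) * α⁻¹) < 1/2 :=
      lt_of_le_of_ne (not_lt.mp h) (fract_ne_half hirr m hm)
    rw [E_eq_low hα m hlt] at hE
    have := fract_pos hirr m hm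
    nlinarith
  · intro h
    refine ⟨hm, ?_⟩
    rw [E_eq_high hα m h]
    have := Int.fract_lt_one ((m:ℝ) * α⁻¹)
    nlinarith

lemma mem_B_iff (hα : 1 < α) (hirr : Irrational α) (m : ℕ) (hm : 0 < m) :
    m ∈ Bset α ↔ Int.fract ((m:ℝ) * α⁻¹) < 1/2 := by
  have hA : (0:ℝ) < α := by linarith
  constructor
  · rintro ⟨-, hE⟩
    by_contra h
    have hlt : 1/2 < Int.fract ((m:ℝ) * α⁻¹) :=
      lt_of_le_of_ne (not_lt.mp h) (Ne.symm (fract_ne_half hirr m hm))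
    rw [E_eq_high hα m hlt] at hE
    have := Int.fract_lt_one ((m:ℝ) * α⁻¹)
    nlinarith
  · intro h
    refine ⟨hm, ?_⟩
    rw [E_eq_low hα m h]
    have := fract_pos hirr m hm
    nlinarith

end CF
namespace CF
variable {α : ℝ} (c : CF α)

lemma abs_Ff (hα : 1 < α) (k : ℕ) : |c.Ff k| = c.eps k := by
  rw [c.Ff_eq hα k, abs_mul, abs_pow, abs_neg, abs_one, one_pow, one_mul,
    abs_of_pos (c.eps_pos hα k)]

lemma abs_Ff_diff (hα : 1 < α) (k : ℕ) :
    |c.Ff (k+1) - c.Ff k| = c.eps k + c.eps (k+1) := by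
  rw [c.Ff_eq hα k, c.Ff_eq hα (k+1)]
  have h : (-1:ℝ)^(k+2) * c.eps (k+1) - (-1:ℝ)^(k+1) * c.eps k
      = (-1:ℝ)^k * (c.eps (k+1) + c.eps k) := by ring
  rw [h, abs_mul, abs_pow, abs_neg, abs_one, one_pow, one_mul,
    abs_of_pos (add_pos (c.eps_pos hα (k+1)) (c.eps_pos hα k))]
  ring
  
lemma not_both_even (k : ℕ) : ¬(Even (c.P (k+1) : ℤ) ∧ Even (c.QQ (k+1) : ℤ)) := by
  rintro ⟨⟨a, ha⟩, ⟨b, hb⟩⟩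
  have hdet := c.det k
  rw [ha, hb] at hdet
  have h2 : ((-1:ℤ))^(k+1) = 2 * ((c.P k : ℤ) * b - a * (c.QQ k : ℤ)) := by
    linear_combination -hdet
  rcases neg_one_pow_eq_or ℤ (k+1) with h | h <;> rw [h] at h2 <;> omega

lemma not_both_even_diff (k : ℕ) :
    ¬(Even ((c.P (k+1) : ℤ) - c.P k) ∧ Even ((c.QQ (k+1) : ℤ) - c.QQ k)) := by
  rintro ⟨⟨a, ha⟩, ⟨b, hb⟩⟩
  have hdet := c.det k
  have hP : (c.P (k+1) : ℤ) = c.P k + (a + a) := by omega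
  have hQ : (c.QQ (k+1) : ℤ) = c.QQ k + (b + b) := by omega
  rw [hP, hQ] at hdet
  have h2 : ((-1:ℤ))^(k+1) = 2 * ((c.P k : ℤ) * b - a * (c.QQ k : ℤ)) := by
    linear_combination -hdet
  rcases neg_one_pow_eq_or ℤ (k+1) with h | h <;> rw [h] at h2 <;> omega

end CF
namespace CF
variable {α : ℝ} (c : CF α)

lemma not_mem_S (hα : 1 < α) (hirr : Irrational α) (n : ℕ) (j r : ℤ)
    (h0 : 0 < j) (h1 : j < (c.P (n+2) : ℤ))
    (hb : |(j:ℝ) * α⁻¹ - r - 1/2| ≤ (c.eps (n+2) + c.eps (n+3))/2) :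
    2 * c.P (n+2) ∉ Sset α := by
  intro hS
  have hek := c.eps_pos hα (n+2)
  have hek1 := c.eps_pos hα (n+3)
  have hsum : (c.P (n+3) : ℝ) * c.eps (n+2) + (c.P (n+2) : ℝ) * c.eps (n+3) = 1 :=
    c.sum_one hα (n+2)
  have hP2 : 2 ≤ (c.P (n+2) : ℤ) := by omega
  have hP2' : (2:ℝ) ≤ (c.P (n+2) : ℝ) := by exact_mod_cast hP2
  have hPlt : c.P (n+2) < c.P (n+3) := c.P_succ_lt n
  have hP3 : (3:ℝ) ≤ (c.P (n+3) : ℝ) := by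
    have h3 : 3 ≤ c.P (n+3) := by omega
    exact_mod_cast h3
  have hbound : 3 * c.eps (n+2) + 2 * c.eps (n+3) ≤ 1 := by nlinarith
  have heklt : c.eps (n+3) < c.eps (n+2) := c.eps_lt hα (n+2)
  obtain ⟨s, hs⟩ : ∃ s : ℝ, s = c.Ff (n+2) := ⟨_, rfl⟩
  obtain ⟨η, hη⟩ : ∃ η : ℝ, η = (j:ℝ) * α⁻¹ - r - 1/2 := ⟨_, rfl⟩
  rw [← hη] at hb
  have habs : |s| = c.eps (n+2) := by rw [hs]; exact c.abs_Ff hα (n+2)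
  obtain ⟨hs1, hs2⟩ := abs_le.mp habs.le
  obtain ⟨hη1, hη2⟩ := abs_le.mp hb
  have hηlt : |η| < c.eps (n+2) := lt_of_le_of_lt hb (by linarith)
  obtain ⟨hη1', hη2'⟩ := abs_lt.mp hηlt
  have hsph : |s + η| < 1/2 := abs_lt.mpr ⟨by linarith, by linarith⟩
  have hsmh : |s - η| < 1/2 := abs_lt.mpr ⟨by linarith, by linarith⟩
  obtain ⟨hsp1, hsp2⟩ := abs_lt.mp hsph
  obtain ⟨hsm1, hsm2⟩ := abs_lt.mp hsmh
  set jn := j.toNat with hjndef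
  have hjn : (jn:ℤ) = j := Int.toNat_of_nonneg h0.le
  set x := c.P (n+2) - jn with hxdef
  set y := c.P (n+2) + jn with hydef
  have hx1 : 0 < x := by omega
  have hy1 : 0 < y := by omega
  have hne : x ≠ y := by omega
  have hsum2 : x + y = 2 * c.P (n+2) := by omega
  have hxZ : (x:ℤ) = (c.P (n+2) : ℤ) - j := by omega
  have hyZ : (y:ℤ) = (c.P (n+2) : ℤ) + j := by omega
  have hxR : (x:ℝ) = (c.P (n+2) : ℝ) - (j:ℝ) := by exact_mod_cast congrArg (fun z : ℤ => (z:ℝ)) hxZ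
  have hyR : (y:ℝ) = (c.P (n+2) : ℝ) + (j:ℝ) := by exact_mod_cast congrArg (fun z : ℤ => (z:ℝ)) hyZ
  have hyfr : Int.fract ((y:ℝ) * α⁻¹) = 1/2 + (s + η) := by
    have e : (y:ℝ) * α⁻¹ = (((c.QQ (n+2) : ℤ) + r : ℤ) : ℝ) + (1/2 + (s + η)) := by
      rw [hyR, hs, hη]; unfold Ff; push_cast; ring
    rw [e, Int.fract_intCast_add, Int.fract_eq_self.mpr ⟨by linarith, by linarith⟩]
  have hxfr : Int.fract ((x:ℝ) * α⁻¹) = 1/2 + (s - η) := by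
    have e : (x:ℝ) * α⁻¹ = (((c.QQ (n+2) : ℤ) - r - 1 : ℤ) : ℝ) + (1/2 + (s - η)) := by
      rw [hxR, hs, hη]; unfold Ff; push_cast; ring
    rw [e, Int.fract_intCast_add, Int.fract_eq_self.mpr ⟨by linarith, by linarith⟩]
  rcases lt_trichotomy s 0 with hsneg | hszero | hspos
  · -- s < 0 : both in B
    have hsek : s = -c.eps (n+2) := by
      rcases abs_cases s with ⟨h', _⟩ | ⟨h', _⟩ <;> linarith [habs ▸ h']
    have hxB : x ∈ Bset α := (mem_B_iff hα hirr x hx1).mpr (by rw [hxfr]; linarith)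
    have hyB : y ∈ Bset α := (mem_B_iff hα hirr y hy1).mpr (by rw [hyfr]; linarith)
    exact hS.2.2 x hxB y hyB hne hsum2
  · rw [hszero] at habs; simp at habs; linarith
  · -- s > 0 : both in A
    have hsek : s = c.eps (n+2) := by
      rcases abs_cases s with ⟨h', _⟩ | ⟨h', _⟩ <;> linarith [habs ▸ h']
    have hxA : x ∈ Aset α := (mem_A_iff hα hirr x hx1).mpr (by rw [hxfr]; linarith)
    have hyA : y ∈ Aset α := (mem_A_iff hα hirr y hy1).mpr (by rw [hyfr]; linarith)
    exact hS.2.1 x hxA y hyA hne hsum2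

end CF
namespace CF
variable {α : ℝ} (c : CF α)

set_option maxHeartbeats 1600000 in
lemma mem_S (hα : 1 < α) (hirr : Irrational α) (n : ℕ)
    (hnb : ∀ j r : ℤ, 0 < j → j < (c.P (n+2) : ℤ) →
      c.eps (n+2) ≤ |(j:ℝ) * α⁻¹ - r - 1/2|) :
    2 * c.P (n+2) ∈ Sset α := by
  have hek := c.eps_pos hα (n+2)
  have hek1 := c.eps_pos hα (n+3)
  have heklt : c.eps (n+3) < c.eps (n+2) := c.eps_lt hα (n+2)
  have heps12 : c.eps (n+2) < c.eps (n+1) := c.eps_lt hα (n+1)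
  have hsum : (c.P (n+3) : ℝ) * c.eps (n+2) + (c.P (n+2) : ℝ) * c.eps (n+3) = 1 :=
    c.sum_one hα (n+2)
  have hP1 : 1 ≤ c.P (n+2) := c.P_one_le (n+1)
  have hP1R : (1:ℝ) ≤ (c.P (n+2) : ℝ) := by exact_mod_cast hP1
  have hP2 : 2 ≤ c.P (n+3) := c.P_two_le n
  have hP2R : (2:ℝ) ≤ (c.P (n+3) : ℝ) := by exact_mod_cast hP2
  have h2ek : 2 * c.eps (n+2) < 1 := by nlinarith
  obtain ⟨s, hs⟩ : ∃ s : ℝ, s = c.Ff (n+2) := ⟨_, rfl⟩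
  have habs : |s| = c.eps (n+2) := by rw [hs]; exact c.abs_Ff hα (n+2)
  obtain ⟨hs1, hs2⟩ := abs_le.mp habs.le
  have coreB : ∀ x y : ℕ, x ∈ Bset α → y ∈ Bset α → x < y →
      x + y = 2 * c.P (n+2) → False := by
    intro x y hx hy hxy heq
    have hx1 : 0 < x := hx.1
    have hy1 : 0 < y := hy.1
    obtain ⟨jn, hjn⟩ : ∃ jn : ℕ, y = c.P (n+2) + jn := ⟨y - c.P (n+2), by omega⟩
    have hjn0 : 0 < jn := by omega
    have hjnP : jn < c.P (n+2) := by omega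
    have hf2 := (mem_B_iff hα hirr y hy1).mp hy
    have hf1 := (mem_B_iff hα hirr x hx1).mp hx
    have hf2p := fract_pos hirr y hy1
    have hf1p := fract_pos hirr x hx1
    have hfl2 : Int.fract ((y:ℝ)*α⁻¹) = (y:ℝ)*α⁻¹ - ⌊(y:ℝ)*α⁻¹⌋ := (Int.self_sub_floor _).symm
    have hfl1 : Int.fract ((x:ℝ)*α⁻¹) = (x:ℝ)*α⁻¹ - ⌊(x:ℝ)*α⁻¹⌋ := (Int.self_sub_floor _).symm
    obtain ⟨M, hM⟩ : ∃ M : ℤ, M = 2*(c.QQ (n+2):ℤ) - ⌊(x:ℝ)*α⁻¹⌋ - ⌊(y:ℝ)*α⁻¹⌋ := ⟨_, rfl⟩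
    have hsR : (x:ℝ) + (y:ℝ) = 2*(c.P (n+2):ℝ) := by
      have h' := congrArg (fun t : ℕ => (t:ℝ)) heq
      push_cast at h'
      linarith
    have key : Int.fract ((x:ℝ)*α⁻¹) + Int.fract ((y:ℝ)*α⁻¹) = (M:ℝ) + 2*s := by
      rw [hfl1, hfl2, hM, hs]; unfold Ff; push_cast
      linear_combination α⁻¹ * hsR
    have hMbounds : M = 0 ∨ M = 1 := by
      have hMR : -1 < (M:ℝ) ∧ (M:ℝ) < 2 := by constructor <;> nlinarith
      have h1 : (-1:ℤ) < M := by exact_mod_cast hMR.1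
      have h2 : (M:ℤ) < 2 := by exact_mod_cast hMR.2
      omega
    obtain ⟨R, hR⟩ : ∃ R : ℤ, R = ⌊(y:ℝ)*α⁻¹⌋ - (c.QQ (n+2):ℤ) := ⟨_, rfl⟩
    have hjβ : (jn:ℝ)*α⁻¹ - (R:ℝ) = Int.fract ((y:ℝ)*α⁻¹) - s := by
      have hjnR : (jn:ℝ) = (y:ℝ) - (c.P (n+2):ℝ) := by
        have h' := congrArg (fun t : ℕ => (t:ℝ)) hjn
        push_cast at h'
        linarith
      rw [hfl2, hR, hs]; unfold Ff; push_cast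
      linear_combination α⁻¹ * hjnR
    rcases hMbounds with hM0 | hM1
    · -- M = 0 : s > 0, best approximation contradiction
      rw [hM0] at key; push_cast at key
      have hspos : 0 < s := by linarith
      have hsek : s = c.eps (n+2) := by
        rcases abs_cases s with ⟨h', _⟩ | ⟨h', _⟩ <;> linarith [habs ▸ h']
      have hlt : |(jn:ℝ)*α⁻¹ - (R:ℝ)| < c.eps (n+2) := by
        rw [hjβ]; rw [abs_lt]; constructor <;> nlinarith
      have hbest := c.best hα (n+1) (jn:ℤ) R (by exact_mod_cast hjn0) (by exact_mod_cast hjnP)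
      rw [Int.cast_natCast] at hbest
      linarith
    · -- M = 1 : s < 0, hnb contradiction
      rw [hM1] at key; push_cast at key
      have hsneg : s < 0 := by linarith
      have hsek : s = -c.eps (n+2) := by
        rcases abs_cases s with ⟨h', _⟩ | ⟨h', _⟩ <;> linarith [habs ▸ h']
      have hlt : |(jn:ℝ)*α⁻¹ - (R:ℝ) - 1/2| < c.eps (n+2) := by
        have e : (jn:ℝ)*α⁻¹ - (R:ℝ) - 1/2 = (Int.fract ((y:ℝ)*α⁻¹) - s) - 1/2 := by
          linear_combination hjβ
        rw [e, abs_lt]; constructor <;> nlinarith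
      have h := hnb (jn:ℤ) R (by exact_mod_cast hjn0) (by exact_mod_cast hjnP)
      rw [Int.cast_natCast] at h
      linarith
  have coreA : ∀ x y : ℕ, x ∈ Aset α → y ∈ Aset α → x < y →
      x + y = 2 * c.P (n+2) → False := by
    intro x y hx hy hxy heq
    have hx1 : 0 < x := hx.1
    have hy1 : 0 < y := hy.1
    obtain ⟨jn, hjn⟩ : ∃ jn : ℕ, y = c.P (n+2) + jn := ⟨y - c.P (n+2), by omega⟩
    have hjn0 : 0 < jn := by omega
    have hjnP : jn < c.P (n+2) := by omega
    have hf2 := (mem_A_iff hα hirr y hy1).mp hy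
    have hf1 := (mem_A_iff hα hirr x hx1).mp hx
    have hf2l := Int.fract_lt_one ((y:ℝ)*α⁻¹)
    have hf1l := Int.fract_lt_one ((x:ℝ)*α⁻¹)
    have hfl2 : Int.fract ((y:ℝ)*α⁻¹) = (y:ℝ)*α⁻¹ - ⌊(y:ℝ)*α⁻¹⌋ := (Int.self_sub_floor _).symm
    have hfl1 : Int.fract ((x:ℝ)*α⁻¹) = (x:ℝ)*α⁻¹ - ⌊(x:ℝ)*α⁻¹⌋ := (Int.self_sub_floor _).symm
    obtain ⟨M, hM⟩ : ∃ M : ℤ, M = 2*(c.QQ (n+2):ℤ) - ⌊(x:ℝ)*α⁻¹⌋ - ⌊(y:ℝ)*α⁻¹⌋ := ⟨_, rfl⟩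
    have hsR : (x:ℝ) + (y:ℝ) = 2*(c.P (n+2):ℝ) := by
      have h' := congrArg (fun t : ℕ => (t:ℝ)) heq
      push_cast at h'
      linarith
    have key : Int.fract ((x:ℝ)*α⁻¹) + Int.fract ((y:ℝ)*α⁻¹) = (M:ℝ) + 2*s := by
      rw [hfl1, hfl2, hM, hs]; unfold Ff; push_cast
      linear_combination α⁻¹ * hsR
    have hMbounds : M = 1 ∨ M = 2 := by
      have hMR : (0:ℝ) < (M:ℝ) ∧ (M:ℝ) < 3 := by constructor <;> nlinarith
      have h1 : (0:ℤ) < M := by exact_mod_cast hMR.1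
      have h2 : (M:ℤ) < 3 := by exact_mod_cast hMR.2
      omega
    obtain ⟨R, hR⟩ : ∃ R : ℤ, R = ⌊(y:ℝ)*α⁻¹⌋ - (c.QQ (n+2):ℤ) := ⟨_, rfl⟩
    have hjβ : (jn:ℝ)*α⁻¹ - (R:ℝ) = Int.fract ((y:ℝ)*α⁻¹) - s := by
      have hjnR : (jn:ℝ) = (y:ℝ) - (c.P (n+2):ℝ) := by
        have h' := congrArg (fun t : ℕ => (t:ℝ)) hjn
        push_cast at h'
        linarith
      rw [hfl2, hR, hs]; unfold Ff; push_cast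
      linear_combination α⁻¹ * hjnR
    rcases hMbounds with hM1 | hM2
    · -- M = 1 : s > 0, hnb contradiction
      rw [hM1] at key; push_cast at key
      have hspos : 0 < s := by linarith
      have hsek : s = c.eps (n+2) := by
        rcases abs_cases s with ⟨h', _⟩ | ⟨h', _⟩ <;> linarith [habs ▸ h']
      have hlt : |(jn:ℝ)*α⁻¹ - (R:ℝ) - 1/2| < c.eps (n+2) := by
        have e : (jn:ℝ)*α⁻¹ - (R:ℝ) - 1/2 = (Int.fract ((y:ℝ)*α⁻¹) - s) - 1/2 := by
          linear_combination hjβ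
        rw [e, abs_lt]; constructor <;> nlinarith
      have h := hnb (jn:ℤ) R (by exact_mod_cast hjn0) (by exact_mod_cast hjnP)
      rw [Int.cast_natCast] at h
      linarith
    · -- M = 2 : s < 0, best approximation contradiction with R+1
      rw [hM2] at key; push_cast at key
      have hsneg : s < 0 := by linarith
      have hsek : s = -c.eps (n+2) := by
        rcases abs_cases s with ⟨h', _⟩ | ⟨h', _⟩ <;> linarith [habs ▸ h']
      have hlt : |(jn:ℝ)*α⁻¹ - ((R+1 : ℤ):ℝ)| < c.eps (n+2) := by
        have e : (jn:ℝ)*α⁻¹ - ((R+1 : ℤ):ℝ) = (Int.fract ((y:ℝ)*α⁻¹) - s) - 1 := by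
          push_cast; linear_combination hjβ
        rw [e, abs_lt]; constructor <;> nlinarith
      have hbest := c.best hα (n+1) (jn:ℤ) (R+1) (by exact_mod_cast hjn0) (by exact_mod_cast hjnP)
      rw [Int.cast_natCast] at hbest
      linarith
  refine ⟨by omega, ?_, ?_⟩
  · intro x hx y hy hne heq
    rcases Nat.lt_or_ge x y with h | h
    · exact absurd heq (fun heq' => coreA x y hx hy h heq')
    · have h' : y < x := by omega
      exact absurd heq (fun heq' => coreA y x hy hx h' (by omega))
  · intro x hx y hy hne heq
    rcases Nat.lt_or_ge x y with h | h
    · exact absurd heq (fun heq' => coreB x y hx hy h heq')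
    · have h' : y < x := by omega
      exact absurd heq (fun heq' => coreB y x hy hx h' (by omega))

end CF

set_option maxHeartbeats 1600000 in
/-- `2 * p_n ∈ S_α` iff `p_n` is odd and either (i) `p_{n+1}` is odd and
`a_{n+1} ≥ 3`, or (ii) `p_{n+1}` is even and `a_{n+1} ≥ 2`, or (iii) `p_n = 1`. -/
theorem stmt10 (α : ℝ) (hα : 1 < α) (hirr : Irrational α) (c : CF α) (n : ℕ) :
    2 * c.p n ∈ Sset α ↔
      Odd (c.p n) ∧
        ((Odd (c.p (n + 1)) ∧ 3 ≤ c.a (n + 1)) ∨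
         (Even (c.p (n + 1)) ∧ 2 ≤ c.a (n + 1)) ∨
         c.p n = 1) := by
  have hek := c.eps_pos hα (n+2)
  have hek1 := c.eps_pos hα (n+3)
  have hP1 : 1 ≤ c.P (n+2) := c.P_one_le (n+1)
  have hP31 : 2 ≤ c.P (n+3) := c.P_two_le n
  have hPlt : c.P (n+2) < c.P (n+3) := c.P_succ_lt n
  have hPrec : c.P (n+3) = c.a (n+1) * c.P (n+2) + c.P (n+1) := c.P_rec' (n+1)
  have ha1 : 1 ≤ c.a (n+1) := c.ha (n+1)
  constructor
  · intro hS
    by_contra hC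
    rcases Nat.even_or_odd (c.p n) with hEv | hOdd
    · -- p n even : pair from j = pn/2
      obtain ⟨a, ha⟩ := hEv
      have haP : c.P (n+2) = a + a := ha
      have hqodd : Odd ((c.QQ (n+2)):ℤ) := by
        rcases Int.even_or_odd ((c.QQ (n+2)):ℤ) with he | ho
        · exfalso
          have hPev : Even ((c.P (n+2)):ℤ) := ⟨(a:ℤ), by exact_mod_cast haP⟩
          exact c.not_both_even (n+1) ⟨hPev, he⟩
        · exact ho
      obtain ⟨b, hb⟩ := hqodd
      have e : (((a:ℤ)):ℝ)*α⁻¹ - (b:ℝ) - 1/2 = (c.Ff (n+2))/2 := by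
        unfold CF.Ff
        have e1 : ((c.P (n+2)):ℝ) = (a:ℝ) + a := by exact_mod_cast haP
        have e2 : ((c.QQ (n+2)):ℝ) = 2*(b:ℝ) + 1 := by exact_mod_cast hb
        rw [e1, e2]; push_cast; ring
      refine (c.not_mem_S hα hirr n (a:ℤ) b ?_ ?_ ?_) hS
      · have : 1 ≤ a := by omega
        exact_mod_cast this
      · have : a < c.P (n+2) := by omega
        exact_mod_cast this
      · rw [e, abs_div, c.abs_Ff hα (n+2), abs_two]
        linarith
    · -- p n odd
      have hX : ¬((Odd (c.p (n + 1)) ∧ 3 ≤ c.a (n + 1)) ∨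
          (Even (c.p (n + 1)) ∧ 2 ≤ c.a (n + 1)) ∨ c.p n = 1) :=
        fun hx => hC ⟨hOdd, hx⟩
      push_neg at hX
      obtain ⟨hX1, hX2, hX3⟩ := hX
      obtain ⟨w, hw⟩ := hOdd
      have hwP : c.P (n+2) = 2*w + 1 := hw
      have hne1 : c.P (n+2) ≠ 1 := hX3
      have hP3 : 3 ≤ c.P (n+2) := by omega
      have hplt : c.P (n+1) < c.P (n+2) := c.P_lt_of_two_le n (by omega)
      rcases Nat.even_or_odd (c.p (n+1)) with hEv1 | hOdd1
      · -- p (n+1) even, a (n+1) = 1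
        have ha1' : c.a (n+1) = 1 := by
          have := hX2 hEv1
          omega
        obtain ⟨a, ha⟩ := hEv1
        have haP : c.P (n+3) = a + a := ha
        have hqodd : Odd ((c.QQ (n+3)):ℤ) := by
          rcases Int.even_or_odd ((c.QQ (n+3)):ℤ) with he | ho
          · exfalso
            have hPev : Even ((c.P (n+3)):ℤ) := ⟨(a:ℤ), by exact_mod_cast haP⟩
            exact c.not_both_even (n+2) ⟨hPev, he⟩
          · exact ho
        obtain ⟨b, hb⟩ := hqodd
        have e : (((a:ℤ)):ℝ)*α⁻¹ - (b:ℝ) - 1/2 = (c.Ff (n+3))/2 := by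
          unfold CF.Ff
          have e1 : ((c.P (n+3)):ℝ) = (a:ℝ) + a := by exact_mod_cast haP
          have e2 : ((c.QQ (n+3)):ℝ) = 2*(b:ℝ) + 1 := by exact_mod_cast hb
          rw [e1, e2]; push_cast; ring
        refine (c.not_mem_S hα hirr n (a:ℤ) b ?_ ?_ ?_) hS
        · have : 1 ≤ a := by omega
          exact_mod_cast this
        · have : a < c.P (n+2) := by
            rw [ha1', one_mul] at hPrec
            omega
          exact_mod_cast this
        · rw [e, abs_div, c.abs_Ff hα (n+3), abs_two]
          linarith
      · -- p (n+1) odd, a (n+1) ≤ 2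
        have ha2' : c.a (n+1) ≤ 2 := by
          have := hX1 hOdd1
          omega
        obtain ⟨w1, hw1⟩ := hOdd1
        have hw1P : c.P (n+3) = 2*w1 + 1 := hw1
        have hqodd : Odd ((c.QQ (n+3) : ℤ) - (c.QQ (n+2) : ℤ)) := by
          rcases Int.even_or_odd ((c.QQ (n+3) : ℤ) - (c.QQ (n+2) : ℤ)) with he | ho
          · exfalso
            have hPev : Even ((c.P (n+3) : ℤ) - (c.P (n+2) : ℤ)) :=
              ⟨(w1:ℤ) - w, by push_cast [hw1P, hwP]; ring⟩
            exact c.not_both_even_diff (n+2) ⟨hPev, he⟩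
          · exact ho
        obtain ⟨b, hb⟩ := hqodd
        have hwlt : w < w1 := by omega
        have e : ((w1:ℝ) - (w:ℝ))*α⁻¹ - (b:ℝ) - 1/2 = (c.Ff (n+3) - c.Ff (n+2))/2 := by
          unfold CF.Ff
          have e1 : ((c.P (n+3)):ℝ) = 2*(w1:ℝ) + 1 := by exact_mod_cast hw1P
          have e2 : ((c.P (n+2)):ℝ) = 2*(w:ℝ) + 1 := by exact_mod_cast hwP
          have e3 : ((c.QQ (n+3)):ℝ) - ((c.QQ (n+2)):ℝ) = 2*(b:ℝ) + 1 := by exact_mod_cast hb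
          rw [e1, e2]; linear_combination (1:ℝ)/2 * e3
        refine (c.not_mem_S hα hirr n ((w1:ℤ) - w) b ?_ ?_ ?_) hS
        · omega
        · -- w1 - w < P (n+2) ⟺ P(n+3) < 3 P(n+2)
          have h3 : c.P (n+3) < 3 * c.P (n+2) := by
            have hm : c.a (n+1) * c.P (n+2) ≤ 2 * c.P (n+2) :=
              Nat.mul_le_mul_right _ ha2'
            omega
          omega
        · have habsd : |c.Ff (n+3) - c.Ff (n+2)| = c.eps (n+2) + c.eps (n+3) :=
            c.abs_Ff_diff hα (n+2)
          push_cast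
          rw [e, abs_div, habsd, abs_two]
  · intro hC
    refine c.mem_S hα hirr n ?_
    intro j r h0 h1
    by_contra hlt
    push_neg at hlt
    have ho : c.P (n+2) % 2 = 1 := Nat.odd_iff.mp hC.1
    have h2' : |(((2*j):ℤ):ℝ)*α⁻¹ - ((2*r+1 : ℤ):ℝ)| < 2 * c.eps (n+2) := by
      have e : (((2*j):ℤ):ℝ)*α⁻¹ - ((2*r+1 : ℤ):ℝ) = 2*((j:ℝ)*α⁻¹ - r - 1/2) := by
        push_cast; ring
      rw [e, abs_mul, abs_two]
      linarith
    have hcl := c.classify hα n (2*j) (2*r+1) (by omega) (by omega) h2'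
    rcases hcl with ⟨hm, -⟩ | ⟨hm, -⟩ | ⟨hm, -⟩ | ⟨hm, -⟩
    · omega
    · -- 2j = P (n+3)
      rcases hC.2 with ⟨ho1, -⟩ | ⟨he1, ha2⟩ | hp1
      · have := Nat.odd_iff.mp ho1
        have ho1' : c.P (n+3) % 2 = 1 := this
        omega
      · have hge : 2 * c.P (n+2) ≤ c.P (n+3) := by
          have hm2 : 2 * c.P (n+2) ≤ c.a (n+1) * c.P (n+2) :=
            Nat.mul_le_mul_right _ ha2
          omega
        omega
      · have hp1' : c.P (n+2) = 1 := hp1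
        omega
    · -- 2j = P (n+3) - P (n+2)
      rcases hC.2 with ⟨-, ha3⟩ | ⟨he1, -⟩ | hp1
      · have hge : 3 * c.P (n+2) ≤ c.P (n+3) := by
          have hm3 : 3 * c.P (n+2) ≤ c.a (n+1) * c.P (n+2) :=
            Nat.mul_le_mul_right _ ha3
          omega
        omega
      · have he1' : c.P (n+3) % 2 = 0 := Nat.even_iff.mp he1
        omega
      · have hp1' : c.P (n+2) = 1 := hp1
        omega
    · omega
end
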